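/- arXiv:2309.07089 — 3 statements merged into one kernel-verified Lean document; each statement's English description precedes it below -/
import Mathlib

section
/- Let G be a simple graph on n vertices and let h, k be integers with 1 ≤ h < k ≤ n/2. If v is an eigenvector of the Laplacian matrix L(F_h(G)) with eigenvalue λ, then Bv is nonzero and is an eigenvector of the Laplacian matrix L(F_k(G)) with the same eigenvalue λ, where B is the inclusion matrix from h-subsets to k-subsets. -/
open Finset Polynomial Real Matrix

noncomputable section

/-- The `k`-token graph of a simple graph `G`. -/
def tokenGraph {V : Type*} [DecidableEq V] (G : SimpleGraph V) (k : ℕ) :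
    SimpleGraph {s : Finset V // s.card = k} where
  Adj A B := ∃ a b, G.Adj a b ∧ a ∈ A.1 ∧ b ∈ B.1 ∧ symmDiff A.1 B.1 = {a, b}
  symm := by
    constructor
    rintro A B ⟨a, b, hab, ha, hb, hd⟩
    exact ⟨b, a, hab.symm, hb, ha, by rw [symmDiff_comm, hd, Finset.pair_comm]⟩
  loopless := by
    constructor
    rintro A ⟨a, b, hab, ha, hb, hd⟩
    rw [symmDiff_self, Finset.bot_eq_empty] at hd
    exact (Finset.insert_ne_empty a {b}) hd.symm

/-- The Laplacian matrix (over ℝ) of a finite simple graph. -/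
def lapMat {V : Type*} [Fintype V] [DecidableEq V] (G : SimpleGraph V) : Matrix V V ℝ :=
  letI := Classical.decRel G.Adj
  G.lapMatrix ℝ

/-- The Laplacian matrix (over ℂ) of a finite simple graph. -/
def lapMatC {V : Type*} [Fintype V] [DecidableEq V] (G : SimpleGraph V) : Matrix V V ℂ :=
  letI := Classical.decRel G.Adj
  G.lapMatrix ℂ

/-- The Laplacian eigenvalues of `G`, with multiplicity, in nondecreasing order. -/
def lapSpec {V : Type*} [Fintype V] [DecidableEq V] (G : SimpleGraph V) : List ℝ :=
  ((lapMat G).charpoly.roots).sort (· ≤ ·)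

/-- The algebraic connectivity: the second-smallest Laplacian eigenvalue. -/
def algConn {V : Type*} [Fintype V] [DecidableEq V] (G : SimpleGraph V) : ℝ :=
  (lapSpec G).getD 1 0

/-- The largest Laplacian eigenvalue (Laplacian spectral radius). -/
def lapSpecRadius {V : Type*} [Fintype V] [DecidableEq V] (G : SimpleGraph V) : ℝ :=
  (lapSpec G).getLastD 0

/-- `μ` is an eigenvalue of the Laplacian matrix of `G`. -/
def IsLapEigen {V : Type*} [Fintype V] [DecidableEq V] (G : SimpleGraph V) (μ : ℝ) : Prop :=
  ∃ v : V → ℝ, v ≠ 0 ∧ (lapMat G).mulVec v = μ • v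

/-- The induced subgraph of `G` on the complement of the vertex `i` (i.e. `G ∖ i`). -/
def deleteVert {V : Type*} (G : SimpleGraph V) (i : V) : SimpleGraph {v : V // v ≠ i} :=
  SimpleGraph.comap Subtype.val G

/-- The cycle graph on `ℤ/nℤ`, where `i` is adjacent to `i ± 1`. -/
def cycleG (n : ℕ) : SimpleGraph (ZMod n) where
  Adj x y := x ≠ y ∧ (x - y = 1 ∨ y - x = 1)
  symm := by constructor; rintro x y ⟨hxy, h⟩; exact ⟨hxy.symm, h.symm⟩
  loopless := by constructor; rintro x ⟨hx, _⟩; exact hx rfl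

/-- The inclusion matrix from `h`-subsets to `k`-subsets: rows indexed by `k`-subsets `A`,
columns by `h`-subsets `X`, with entry `1` if `X ⊆ A` and `0` otherwise. -/
def inclMatrix (V : Type*) [Fintype V] [DecidableEq V] (h k : ℕ) :
    Matrix {s : Finset V // s.card = k} {s : Finset V // s.card = h} ℝ :=
  fun A X => if X.1 ⊆ A.1 then 1 else 0

/-- The `(n;k)`-binomial matrix: rows indexed by `k`-subsets `A`, columns by vertices `j`,
with entry `1` if `j ∈ A` and `0` otherwise. -/
def binomMatrix (V : Type*) [Fintype V] [DecidableEq V] (k : ℕ) :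
    Matrix {s : Finset V // s.card = k} V ℝ :=
  fun A j => if j ∈ A.1 then 1 else 0

/-- The Kneser graph `K(n,k)`. -/
def kneserGraph (n k : ℕ) : SimpleGraph {s : Finset (Fin n) // s.card = k} where
  Adj A B := A ≠ B ∧ Disjoint A.1 B.1
  symm := by constructor; rintro A B ⟨h1, h2⟩; exact ⟨h1.symm, h2.symm⟩
  loopless := by constructor; rintro A ⟨h1, _⟩; exact h1 rfl

end

noncomputable section

namespace TokenAux
variable {V : Type*} [DecidableEq V]

/-- move A a b = A - a + b -/
def move (A : Finset V) (a b : V) : Finset V := insert b (A.erase a)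

lemma card_move {A : Finset V} {a b : V} (ha : a ∈ A) (hb : b ∉ A) :
    (move A a b).card = A.card := by
  rw [move, card_insert_of_notMem (fun hbb => hb (mem_of_mem_erase hbb)),
    card_erase_of_mem ha]
  have : 1 ≤ A.card := card_pos.2 ⟨a, ha⟩
  omega

lemma token_adj (G : SimpleGraph V) {k : ℕ} (A B : {s : Finset V // s.card = k}) :
    (tokenGraph G k).Adj A B ↔
      ∃ a ∈ A.1, ∃ b ∉ A.1, G.Adj a b ∧ B.1 = move A.1 a b := by
  constructor
  · rintro ⟨a, b, hab, ha, hb, hd⟩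
    have hne : a ≠ b := hab.ne
    have hxd : ∀ x, ((x ∈ A.1 ∧ x ∉ B.1) ∨ (x ∈ B.1 ∧ x ∉ A.1)) ↔ (x = a ∨ x = b) := by
      intro x
      rw [← Finset.mem_symmDiff, hd, Finset.mem_insert, Finset.mem_singleton]
    have haB : a ∉ B.1 := by
      have := (hxd a).2 (Or.inl rfl)
      tauto
    have hbA : b ∉ A.1 := by
      have := (hxd b).2 (Or.inr rfl)
      tauto
    refine ⟨a, ha, b, hbA, hab, ?_⟩
    ext x
    simp only [move, mem_insert, mem_erase]
    constructor
    · intro hxB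
      by_cases hxb : x = b
      · exact Or.inl hxb
      · right
        by_cases hxA : x ∈ A.1
        · refine ⟨fun hxa => haB (hxa ▸ hxB), hxA⟩
        · rcases (hxd x).1 (Or.inr ⟨hxB, hxA⟩) with h | h
          · exact absurd (h ▸ hxB) haB
          · exact absurd h hxb
    · rintro (rfl | ⟨hxa, hxA⟩)
      · exact hb
      · by_contra hxB
        rcases (hxd x).1 (Or.inl ⟨hxA, hxB⟩) with h | h
        · exact hxa h
        · exact hbA (h ▸ hxA)
  · rintro ⟨a, ha, b, hb, hab, hB⟩
    refine ⟨a, b, hab, ha, by rw [hB]; exact mem_insert_self _ _, ?_⟩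
    have hAB : A.1 \ B.1 = {a} := by
      ext x
      simp only [hB, move, mem_sdiff, mem_insert, mem_erase, mem_singleton]
      constructor
      · rintro ⟨hxA, hx⟩
        push_neg at hx
        by_contra hxa
        exact (hx.2 hxa hxA).elim
      · rintro rfl
        refine ⟨ha, ?_⟩
        push_neg
        refine ⟨fun h => (hb (h ▸ ha)).elim, fun h => absurd rfl h⟩
    have hBA : B.1 \ A.1 = {b} := by
      ext x
      simp only [hB, move, mem_sdiff, mem_insert, mem_erase, mem_singleton]
      constructor
      · rintro ⟨hx, hxA⟩
        rcases hx with rfl | ⟨_, hxA'⟩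
        · rfl
        · exact absurd hxA' hxA
      · rintro rfl
        exact ⟨Or.inl rfl, hb⟩
    rw [symmDiff_def, Finset.sup_eq_union, hAB, hBA]
    ext x; simp [or_comm]

end TokenAux
end

noncomputable section
namespace TokenAux
variable {V : Type*} [DecidableEq V] [Fintype V]

def mvS {k : ℕ} (A : {s : Finset V // s.card = k}) (a b : V) : {s : Finset V // s.card = k} :=
  if h : (move A.1 a b).card = k then ⟨move A.1 a b, h⟩ else A

lemma mvS_coe {k : ℕ} {A : {s : Finset V // s.card = k}} {a b : V}
    (ha : a ∈ A.1) (hb : b ∉ A.1) : (mvS A a b).1 = move A.1 a b := by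
  rw [mvS, dif_pos (by rw [card_move ha hb, A.2])]

lemma lapMat_mulVec_apply {W : Type*} [Fintype W] [DecidableEq W] (H : SimpleGraph W)
    [DecidableRel H.Adj] (w : W → ℝ) (a : W) :
    (lapMat H).mulVec w a = ∑ b ∈ H.neighborFinset a, (w a - w b) := by
  have : lapMat H = H.lapMatrix ℝ := by unfold lapMat; congr!
  rw [this, SimpleGraph.lapMatrix_mulVec_apply, Finset.sum_sub_distrib, Finset.sum_const,
    SimpleGraph.card_neighborFinset_eq_degree, nsmul_eq_mul]

lemma lap_token_mulVec (G : SimpleGraph V) [DecidableRel G.Adj] {k : ℕ}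
    (w : {s : Finset V // s.card = k} → ℝ) (A : {s : Finset V // s.card = k}) :
    (lapMat (tokenGraph G k)).mulVec w A
      = ∑ p ∈ (A.1 ×ˢ A.1ᶜ).filter (fun p => G.Adj p.1 p.2), (w A - w (mvS A p.1 p.2)) := by
  letI : DecidableRel (tokenGraph G k).Adj := Classical.decRel _
  rw [lapMat_mulVec_apply]
  refine (Finset.sum_bij (fun p (_ : p ∈ _) => mvS A p.1 p.2) ?_ ?_ ?_ ?_).symm
  · rintro ⟨a, b⟩ hp
    simp only [mem_filter, mem_product, mem_compl] at hp
    rw [SimpleGraph.mem_neighborFinset, token_adj]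
    exact ⟨a, hp.1.1, b, hp.1.2, hp.2, by simpa using (mvS_coe hp.1.1 hp.1.2)⟩
  · rintro ⟨a, b⟩ hp ⟨a', b'⟩ hp' heq
    simp only [mem_filter, mem_product, mem_compl] at hp hp'
    have hc : move A.1 a b = move A.1 a' b' := by
      rw [← mvS_coe hp.1.1 hp.1.2, ← mvS_coe hp'.1.1 hp'.1.2]
      exact congrArg Subtype.val heq
    have hbb : b = b' := by
      have hb1 : b ∈ move A.1 a' b' := hc ▸ mem_insert_self b (A.1.erase a)
      rcases mem_insert.1 hb1 with h | h
      · exact h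
      · exact absurd (mem_of_mem_erase h) hp.1.2
    have haa : a = a' := by
      have h1 : A.1.erase a = A.1.erase a' := by
        have hbna : b ∉ A.1.erase a := fun h => hp.1.2 (mem_of_mem_erase h)
        have hbna' : b' ∉ A.1.erase a' := fun h => hp'.1.2 (mem_of_mem_erase h)
        subst hbb
        rw [move, move] at hc
        ext x
        constructor
        · intro hx
          have : x ∈ insert b (A.1.erase a') := hc ▸ mem_insert_of_mem hx
          rcases mem_insert.1 this with rfl | h
          · exact absurd hx hbna
          · exact h
        · intro hx
          have : x ∈ insert b (A.1.erase a) := hc ▸ mem_insert_of_mem hx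
          rcases mem_insert.1 this with rfl | h
          · exact absurd hx hbna'
          · exact h
      exact (Finset.erase_inj A.1 hp.1.1).1 h1
    simp [haa, hbb]
  · intro C hC
    rw [SimpleGraph.mem_neighborFinset, token_adj] at hC
    obtain ⟨a, ha, b, hb, hab, hC1⟩ := hC
    refine ⟨⟨a, b⟩, ?_, ?_⟩
    · simp only [mem_filter, mem_product, mem_compl]
      exact ⟨⟨ha, hb⟩, hab⟩
    · exact Subtype.ext ((mvS_coe ha hb).trans hC1.symm)
  · intros; rfl

end TokenAux
end

noncomputable section
namespace TokenAux
variable {V : Type*} [DecidableEq V] [Fintype V]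

lemma move_move {X : Finset V} {x y : V} (hx : x ∈ X) (hy : y ∉ X) :
    move (move X x y) y x = X := by
  unfold move
  rw [Finset.erase_insert (fun h => hy (mem_of_mem_erase h)), insert_erase hx]

lemma sum_powersetCard_insert {t : Finset V} {a : V} (ha : a ∉ t) (m : ℕ) (f : Finset V → ℝ) :
    ∑ X ∈ (insert a t).powersetCard (m+1), f X
      = ∑ X ∈ t.powersetCard (m+1), f X + ∑ X ∈ t.powersetCard m, f (insert a X) := by
  rw [Finset.powersetCard_succ_insert ha, Finset.sum_union, Finset.sum_image]
  · intro X hX Y hY hXY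
    have hXa : a ∉ X := fun h => ha ((mem_powersetCard.1 hX).1 h)
    have hYa : a ∉ Y := fun h => ha ((mem_powersetCard.1 hY).1 h)
    rw [← Finset.erase_insert hXa, ← Finset.erase_insert hYa, hXY]
  · rw [Finset.disjoint_left]
    intro X hX hX'
    obtain ⟨Y, hY, rfl⟩ := Finset.mem_image.1 hX'
    exact ha ((mem_powersetCard.1 hX).1 (mem_insert_self a Y))

lemma sum_diff_insert {t : Finset V} {a b : V} (ha : a ∉ t) (hb : b ∉ t) (m : ℕ)
    (f : Finset V → ℝ) :
    ∑ X ∈ (insert a t).powersetCard (m+1), f X - ∑ X ∈ (insert b t).powersetCard (m+1), f X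
      = ∑ X ∈ t.powersetCard m, (f (insert a X) - f (insert b X)) := by
  rw [sum_powersetCard_insert ha, sum_powersetCard_insert hb, Finset.sum_sub_distrib]
  ring

/-- The key combinatorial identity. -/
theorem key (G : SimpleGraph V) [DecidableRel G.Adj] (f : Finset V → ℝ) (h0 : ℕ) (A : Finset V) :
    ∑ X ∈ A.powersetCard (h0+1),
        ∑ q ∈ (X ×ˢ Xᶜ).filter (fun p => G.Adj p.1 p.2), (f X - f (move X q.1 q.2))
      = ∑ p ∈ (A ×ˢ Aᶜ).filter (fun p => G.Adj p.1 p.2),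
          ∑ X ∈ (A.erase p.1).powersetCard h0, (f (insert p.1 X) - f (insert p.2 X)) := by
  have hsplit : ∀ X ∈ A.powersetCard (h0+1),
      ∑ q ∈ (X ×ˢ Xᶜ).filter (fun p => G.Adj p.1 p.2), (f X - f (move X q.1 q.2))
        = (∑ q ∈ ((X ×ˢ Xᶜ).filter (fun p => G.Adj p.1 p.2)).filter (fun q => q.2 ∈ A),
            (f X - f (move X q.1 q.2)))
          + ∑ q ∈ ((X ×ˢ Xᶜ).filter (fun p => G.Adj p.1 p.2)).filter (fun q => q.2 ∉ A),
            (f X - f (move X q.1 q.2)) := by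
    intro X _
    exact (Finset.sum_filter_add_sum_filter_not _ _ _).symm
  rw [Finset.sum_congr rfl hsplit, Finset.sum_add_distrib]
  have hin : ∑ X ∈ A.powersetCard (h0+1),
      ∑ q ∈ ((X ×ˢ Xᶜ).filter (fun p => G.Adj p.1 p.2)).filter (fun q => q.2 ∈ A),
        (f X - f (move X q.1 q.2)) = 0 := by
    rw [Finset.sum_sigma']
    refine Finset.sum_involution
      (fun z _ => ⟨move z.1 z.2.1 z.2.2, (z.2.2, z.2.1)⟩) ?_ ?_ ?_ ?_
    · rintro ⟨X, x, y⟩ hz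
      simp only [Finset.mem_sigma, Finset.mem_filter, Finset.mem_product,
        Finset.mem_compl, Finset.mem_powersetCard] at hz
      obtain ⟨⟨hXA, hXc⟩, ⟨⟨hx, hy⟩, hadj⟩, hyA⟩ := hz
      simp only
      rw [move_move hx hy]
      ring
    · rintro ⟨X, x, y⟩ hz hne heq
      simp only [Finset.mem_sigma, Finset.mem_filter, Finset.mem_product,
        Finset.mem_compl, Finset.mem_powersetCard] at hz
      obtain ⟨⟨hXA, hXc⟩, ⟨⟨hx, hy⟩, hadj⟩, hyA⟩ := hz
      have h2 := congrArg (fun z => z.2) heq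
      simp only at h2
      have : y = x := congrArg Prod.fst (eq_of_heq (Sigma.mk.inj_iff.1 heq).2)
      exact hadj.ne (this ▸ rfl)
    · rintro ⟨X, x, y⟩ hz
      simp only [Finset.mem_sigma, Finset.mem_filter, Finset.mem_product,
        Finset.mem_compl, Finset.mem_powersetCard] at hz
      obtain ⟨⟨hXA, hXc⟩, ⟨⟨hx, hy⟩, hadj⟩, hyA⟩ := hz
      simp only [Finset.mem_sigma, Finset.mem_filter, Finset.mem_product,
        Finset.mem_compl, Finset.mem_powersetCard]
      refine ⟨⟨?_, ?_⟩, ⟨⟨?_, ?_⟩, hadj.symm⟩, hXA hx⟩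
      · exact insert_subset (by simpa using hyA) ((Finset.erase_subset _ _).trans hXA)
      · rw [card_move hx hy, hXc]
      · exact mem_insert_self _ _
      · intro hmem
        rcases mem_insert.1 hmem with h | h
        · exact hadj.ne h
        · exact (notMem_erase x X) h
    · rintro ⟨X, x, y⟩ hz
      simp only [Finset.mem_sigma, Finset.mem_filter, Finset.mem_product,
        Finset.mem_compl, Finset.mem_powersetCard] at hz
      obtain ⟨⟨hXA, hXc⟩, ⟨⟨hx, hy⟩, hadj⟩, hyA⟩ := hz
      simp only
      rw [move_move hx hy]
  rw [hin, zero_add, Finset.sum_sigma', Finset.sum_sigma']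
  refine Finset.sum_nbij' (fun z => ⟨(z.2.1, z.2.2), z.1.erase z.2.1⟩)
    (fun u => ⟨insert u.1.1 u.2, (u.1.1, u.1.2)⟩) ?_ ?_ ?_ ?_ ?_
  · rintro ⟨X, x, y⟩ hz
    simp only [Finset.mem_sigma, Finset.mem_filter, Finset.mem_product,
      Finset.mem_compl, Finset.mem_powersetCard] at hz ⊢
    obtain ⟨⟨hXA, hXc⟩, ⟨⟨hx, hy⟩, hadj⟩, hyA⟩ := hz
    refine ⟨⟨⟨hXA hx, hyA⟩, hadj⟩, ?_, ?_⟩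
    · exact Finset.erase_subset_erase _ hXA
    · rw [Finset.card_erase_of_mem hx, hXc]
      omega
  · rintro ⟨⟨a, b⟩, X'⟩ hu
    simp only [Finset.mem_sigma, Finset.mem_filter, Finset.mem_product,
      Finset.mem_compl, Finset.mem_powersetCard] at hu ⊢
    obtain ⟨⟨⟨haA, hbA⟩, hadj⟩, hX'sub, hX'c⟩ := hu
    have haX' : a ∉ X' := fun h => notMem_erase a A (hX'sub h)
    refine ⟨⟨insert_subset haA (hX'sub.trans (Finset.erase_subset _ _)), ?_⟩,
      ⟨⟨mem_insert_self _ _, ?_⟩, hadj⟩, hbA⟩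
    · rw [Finset.card_insert_of_notMem haX', hX'c]
    · intro hmem
      rcases mem_insert.1 hmem with h | h
      · exact hbA (h ▸ haA)
      · exact hbA (hX'sub.trans (Finset.erase_subset _ _) h)
  · rintro ⟨X, x, y⟩ hz
    simp only [Finset.mem_sigma, Finset.mem_filter, Finset.mem_product,
      Finset.mem_compl, Finset.mem_powersetCard] at hz
    obtain ⟨⟨hXA, hXc⟩, ⟨⟨hx, hy⟩, hadj⟩, hyA⟩ := hz
    simp only
    rw [insert_erase hx]
  · rintro ⟨⟨a, b⟩, X'⟩ hu
    simp only [Finset.mem_sigma, Finset.mem_filter, Finset.mem_product,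
      Finset.mem_compl, Finset.mem_powersetCard] at hu
    obtain ⟨⟨⟨haA, hbA⟩, hadj⟩, hX'sub, hX'c⟩ := hu
    have haX' : a ∉ X' := fun h => notMem_erase a A (hX'sub h)
    simp only
    rw [Finset.erase_insert haX']
  · rintro ⟨X, x, y⟩ hz
    simp only [Finset.mem_sigma, Finset.mem_filter, Finset.mem_product,
      Finset.mem_compl, Finset.mem_powersetCard] at hz
    obtain ⟨⟨hXA, hXc⟩, ⟨⟨hx, hy⟩, hadj⟩, hyA⟩ := hz
    simp only
    rw [insert_erase hx]
    rfl

end TokenAux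
end

noncomputable section
namespace TokenAux
variable {V : Type*} [DecidableEq V] [Fintype V]

def extv {m : ℕ} (v : {s : Finset V // s.card = m} → ℝ) : Finset V → ℝ :=
  fun s => if hs : s.card = m then v ⟨s, hs⟩ else 0

lemma extv_coe {m : ℕ} (v : {s : Finset V // s.card = m} → ℝ) (X : {s : Finset V // s.card = m}) :
    extv v X.1 = v X := by
  rw [extv, dif_pos X.2]

lemma sum_level (m : ℕ) (f : Finset V → ℝ) :
    ∑ X : {s : Finset V // s.card = m}, f X.1 =
      ∑ s ∈ (univ : Finset V).powersetCard m, f s :=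
  (Finset.sum_subtype _ (fun _ => Finset.mem_powersetCard_univ) f).symm

lemma incl_mulVec_apply {h k : ℕ} (v : {s : Finset V // s.card = h} → ℝ)
    (A : {s : Finset V // s.card = k}) :
    (inclMatrix V h k).mulVec v A = ∑ s ∈ A.1.powersetCard h, extv v s := by
  have h2 : ∑ s ∈ (univ : Finset V).powersetCard h, (if s ⊆ A.1 then extv v s else 0)
      = ∑ X : {s : Finset V // s.card = h}, (if X.1 ⊆ A.1 then extv v X.1 else 0) :=
    Finset.sum_subtype _ (fun _ => Finset.mem_powersetCard_univ) _
  have h3 : ∀ X : {s : Finset V // s.card = h},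
      (if X.1 ⊆ A.1 then extv v X.1 else 0) = (if X.1 ⊆ A.1 then (1:ℝ) else 0) * v X := by
    intro X
    by_cases hs : X.1 ⊆ A.1
    · rw [if_pos hs, if_pos hs, one_mul, extv_coe]
    · rw [if_neg hs, if_neg hs, zero_mul]
  have h4 : (Finset.filter (fun s => s ⊆ A.1) ((univ : Finset V).powersetCard h))
      = A.1.powersetCard h := by
    ext s
    simp only [Finset.mem_filter, mem_powersetCard, Finset.subset_univ, true_and]
    tauto
  unfold Matrix.mulVec inclMatrix dotProduct
  rw [← Finset.sum_congr rfl (fun X _ => h3 X), ← h2, ← Finset.sum_filter, h4]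

/-- Commutation: L_k B = B L_h as actions on vectors. -/
theorem comm_apply (G : SimpleGraph V) [DecidableRel G.Adj] {h0 k : ℕ}
    (v : {s : Finset V // s.card = h0+1} → ℝ) :
    (lapMat (tokenGraph G k)).mulVec ((inclMatrix V (h0+1) k).mulVec v)
      = (inclMatrix V (h0+1) k).mulVec ((lapMat (tokenGraph G (h0+1))).mulVec v) := by
  funext A
  rw [lap_token_mulVec, incl_mulVec_apply]
  have hR : ∀ s ∈ A.1.powersetCard (h0+1),
      extv ((lapMat (tokenGraph G (h0+1))).mulVec v) s
        = ∑ q ∈ (s ×ˢ sᶜ).filter (fun p => G.Adj p.1 p.2), (extv v s - extv v (move s q.1 q.2)) := by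
    intro s hs
    obtain ⟨hsub, hcard⟩ := mem_powersetCard.1 hs
    rw [extv, dif_pos hcard, lap_token_mulVec]
    refine Finset.sum_congr rfl ?_
    rintro ⟨x, y⟩ hq
    simp only [Finset.mem_filter, Finset.mem_product, Finset.mem_compl] at hq
    rw [← extv_coe v (mvS ⟨s, hcard⟩ x y), mvS_coe hq.1.1 hq.1.2, ← extv_coe v ⟨s, hcard⟩]
  rw [incl_mulVec_apply ((lapMat (tokenGraph G (h0+1))).mulVec v) A,
    Finset.sum_congr rfl hR, key G (extv v) h0 A.1]
  refine Finset.sum_congr rfl ?_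
  rintro ⟨a, b⟩ hp
  simp only [Finset.mem_filter, Finset.mem_product, Finset.mem_compl] at hp
  rw [incl_mulVec_apply, mvS_coe hp.1.1 hp.1.2]
  have hA : A.1 = insert a (A.1.erase a) := (insert_erase hp.1.1).symm
  have hb' : b ∉ A.1.erase a := fun h => hp.1.2 (mem_of_mem_erase h)
  have hmv : move A.1 a b = insert b (A.1.erase a) := rfl
  rw [hmv]
  nth_rewrite 1 [hA]
  exact sum_diff_insert (notMem_erase _ _) hb' h0 (extv v)

end TokenAux
end

noncomputable section
namespace TokenAux
variable {V : Type*} [DecidableEq V] [Fintype V]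

lemma card_between (X A : Finset V) (hXA : X ⊆ A) {m : ℕ} (hm : X.card ≤ m) :
    ((Finset.univ.powersetCard m).filter (fun C : Finset V => X ⊆ C ∧ C ⊆ A)).card
      = (A.card - X.card).choose (m - X.card) := by
  rw [← Finset.card_sdiff_of_subset hXA, ← Finset.card_powersetCard]
  apply Finset.card_nbij' (fun C => C \ X) (fun D => D ∪ X)
  · intro C hC
    simp only [Finset.mem_coe, Finset.mem_filter, Finset.mem_powersetCard_univ,
      mem_powersetCard] at hC ⊢
    exact ⟨Finset.sdiff_subset_sdiff hC.2.2 Finset.Subset.rfl,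
      by rw [Finset.card_sdiff_of_subset hC.2.1, hC.1.2]⟩
  · intro D hD
    simp only [Finset.mem_coe, Finset.mem_filter, Finset.mem_powersetCard_univ,
      mem_powersetCard] at hD ⊢
    have hdisj : Disjoint D X := by
      have : D ⊆ A \ X := hD.1
      exact Finset.disjoint_of_subset_left this (Finset.sdiff_disjoint)
    refine ⟨⟨Finset.subset_univ _, ?_⟩, Finset.subset_union_right, Finset.union_subset
      (hD.1.trans (Finset.sdiff_subset)) hXA⟩
    rw [Finset.card_union_of_disjoint hdisj, hD.2]
    omega
  · intro C hC
    simp only [Finset.mem_coe, Finset.mem_filter, Finset.mem_powersetCard_univ] at hC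
    exact Finset.sdiff_union_of_subset hC.2.1
  · intro D hD
    simp only [Finset.mem_coe, mem_powersetCard] at hD
    have hdisj : Disjoint X D :=
      (Finset.disjoint_of_subset_left hD.1 (Finset.sdiff_disjoint)).symm
    dsimp only
    rw [Finset.union_sdiff_distrib, Finset.sdiff_self, Finset.union_empty]
    first
    | exact sdiff_eq_self_iff_disjoint.2 hdisj
    | exact sdiff_eq_self_iff_disjoint.2 hdisj.symm

lemma sum_ind_between {m : ℕ} (X A : Finset V) :
    ∑ C : {s : Finset V // s.card = m}, (if X ⊆ C.1 ∧ C.1 ⊆ A then (1:ℝ) else 0)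
      = (((Finset.univ.powersetCard m).filter (fun C : Finset V => X ⊆ C ∧ C ⊆ A)).card : ℝ) := by
  rw [sum_level m (fun s => if X ⊆ s ∧ s ⊆ A then (1:ℝ) else 0), Finset.sum_boole]

/-- chain relation: U_k ∘ B_{h,k} = (k+1-h) B_{h,k+1} -/
lemma chain (h k : ℕ) (hhk : h ≤ k) :
    (inclMatrix V k (k+1)) * (inclMatrix V h k)
      = ((k+1-h : ℕ) : ℝ) • inclMatrix V h (k+1) := by
  ext A X
  rw [Matrix.mul_apply, Matrix.smul_apply]
  have hterm : ∀ C : {s : Finset V // s.card = k},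
      inclMatrix V k (k+1) A C * inclMatrix V h k C X
        = (if X.1 ⊆ C.1 ∧ C.1 ⊆ A.1 then (1:ℝ) else 0) := by
    intro C
    unfold inclMatrix
    by_cases h1 : C.1 ⊆ A.1 <;> by_cases h2 : X.1 ⊆ C.1 <;>
      simp [h1, h2]
  rw [Finset.sum_congr rfl (fun C _ => hterm C), sum_ind_between]
  unfold inclMatrix
  by_cases hXA : X.1 ⊆ A.1
  · rw [if_pos hXA, card_between X.1 A.1 hXA (by rw [X.2]; omega)]
    rw [X.2, A.2]
    have e1 : k + 1 - h = (k - h) + 1 := by omega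
    rw [e1, Nat.choose_succ_self_right]
    rw [smul_eq_mul, mul_one]
  · rw [if_neg hXA, smul_eq_mul, mul_zero]
    have : ((Finset.univ.powersetCard k).filter (fun C : Finset V => X.1 ⊆ C ∧ C ⊆ A.1)) = ∅ := by
      rw [Finset.filter_eq_empty_iff]
      rintro C _ ⟨hc1, hc2⟩
      exact hXA (hc1.trans hc2)
    rw [this]
    simp

end TokenAux
end

noncomputable section
namespace TokenAux
variable {V : Type*} [DecidableEq V] [Fintype V]

lemma UtU (j0 : ℕ) (hn : 2*(j0+1) < Fintype.card V) :
    (inclMatrix V (j0+1) (j0+2))ᵀ * (inclMatrix V (j0+1) (j0+2))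
      = (inclMatrix V j0 (j0+1)) * (inclMatrix V j0 (j0+1))ᵀ
        + ((Fintype.card V : ℝ) - 2*(j0+1)) • (1 : Matrix _ _ ℝ) := by
  ext X Y
  rw [Matrix.mul_apply, Matrix.add_apply, Matrix.mul_apply, Matrix.smul_apply, Matrix.one_apply]
  have hL : ∀ A : {s : Finset V // s.card = j0+2},
      (inclMatrix V (j0+1) (j0+2))ᵀ X A * (inclMatrix V (j0+1) (j0+2)) A Y
        = (if X.1 ∪ Y.1 ⊆ A.1 ∧ A.1 ⊆ Finset.univ then (1:ℝ) else 0) := by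
    intro A
    rw [Matrix.transpose_apply]
    unfold inclMatrix
    by_cases h1 : X.1 ⊆ A.1 <;> by_cases h2 : Y.1 ⊆ A.1 <;>
      simp [h1, h2, Finset.union_subset_iff]
  have hR : ∀ Z : {s : Finset V // s.card = j0},
      (inclMatrix V j0 (j0+1)) X Z * (inclMatrix V j0 (j0+1))ᵀ Z Y
        = (if (∅ : Finset V) ⊆ Z.1 ∧ Z.1 ⊆ X.1 ∩ Y.1 then (1:ℝ) else 0) := by
    intro Z
    rw [Matrix.transpose_apply]
    unfold inclMatrix
    by_cases h1 : Z.1 ⊆ X.1 <;> by_cases h2 : Z.1 ⊆ Y.1 <;>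
      simp [h1, h2, Finset.subset_inter_iff]
  rw [Finset.sum_congr rfl (fun A _ => hL A), Finset.sum_congr rfl (fun Z _ => hR Z),
    sum_ind_between, sum_ind_between,
    card_between (∅ : Finset V) (X.1 ∩ Y.1) (Finset.empty_subset _) (by simp),
    Finset.card_empty, Nat.sub_zero, Nat.sub_zero]
  by_cases hXY : X = Y
  · subst hXY
    rw [if_pos rfl, Finset.union_self, Finset.inter_self,
      card_between X.1 Finset.univ (Finset.subset_univ _) (by rw [X.2]; omega),
      X.2, Finset.card_univ]
    have e1 : j0 + 2 - (j0+1) = 1 := by omega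
    rw [e1, Nat.choose_one_right, Nat.choose_succ_self_right, smul_eq_mul, mul_one,
      Nat.cast_sub (by omega)]
    push_cast
    ring
  · rw [if_neg hXY, smul_eq_mul, mul_zero, add_zero]
    have hne : X.1 ≠ Y.1 := fun hh => hXY (Subtype.ext hh)
    have hile : X.1 ∩ Y.1 ⊆ X.1 := Finset.inter_subset_left
    have hclt : (X.1 ∩ Y.1).card < j0 + 1 := by
      rcases lt_or_eq_of_le ((Finset.card_le_card hile).trans_eq X.2) with h | h
      · exact h
      · exfalso
        have hXsub : X.1 ⊆ Y.1 := by
          have := Finset.eq_of_subset_of_card_le hile (by rw [h, X.2])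
          rw [← Finset.inter_eq_left, this]
        exact hne (Finset.eq_of_subset_of_card_le hXsub (by rw [X.2, Y.2]))
    have hu : (X.1 ∪ Y.1).card + (X.1 ∩ Y.1).card = 2*(j0+1) := by
      rw [Finset.card_union_add_card_inter, X.2, Y.2]
      ring
    by_cases hc : (X.1 ∩ Y.1).card = j0
    · have hu2 : (X.1 ∪ Y.1).card = j0 + 2 := by omega
      rw [card_between _ _ (Finset.subset_univ _) (by omega), hc, hu2, Nat.sub_self,
        Nat.choose_zero_right, Nat.choose_self]
    · have hclt2 : (X.1 ∩ Y.1).card < j0 := by omega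
      rw [Nat.choose_eq_zero_of_lt hclt2]
      have hemp : ((Finset.univ.powersetCard (j0+2)).filter
          (fun C : Finset V => X.1 ∪ Y.1 ⊆ C ∧ C ⊆ Finset.univ)) = ∅ := by
        rw [Finset.filter_eq_empty_iff]
        rintro C hC ⟨hsub, -⟩
        rw [Finset.mem_powersetCard_univ] at hC
        have := Finset.card_le_card hsub
        omega
      rw [hemp]
      simp

end TokenAux
end

noncomputable section
namespace TokenAux
variable {V : Type*} [DecidableEq V] [Fintype V]

lemma Ustep (j0 : ℕ) (hn : 2*(j0+1) < Fintype.card V)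
    (v : {s : Finset V // s.card = j0+1} → ℝ)
    (hv : (inclMatrix V (j0+1) (j0+2)).mulVec v = 0) : v = 0 := by
  set U := inclMatrix V (j0+1) (j0+2) with hU
  set W := inclMatrix V j0 (j0+1) with hW
  have h1 : v ⬝ᵥ ((Uᵀ * U).mulVec v) = 0 := by
    rw [← Matrix.mulVec_mulVec, hv, Matrix.mulVec_zero, dotProduct_zero]
  have h2 : v ⬝ᵥ ((W * Wᵀ).mulVec v) = (Wᵀ.mulVec v) ⬝ᵥ (Wᵀ.mulVec v) := by
    rw [← Matrix.mulVec_mulVec, Matrix.dotProduct_mulVec]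
    congr 1
    rw [← Matrix.transpose_transpose W, Matrix.vecMul_transpose, Matrix.transpose_transpose]
  rw [UtU j0 hn, Matrix.add_mulVec, dotProduct_add, h2, Matrix.smul_mulVec,
    Matrix.one_mulVec, dotProduct_smul] at h1
  have hpos : (0:ℝ) < (Fintype.card V : ℝ) - 2*(j0+1) := by
    have : (2*(j0+1) : ℝ) < (Fintype.card V : ℝ) := by exact_mod_cast hn
    linarith
  have hq1 : 0 ≤ (Wᵀ.mulVec v) ⬝ᵥ (Wᵀ.mulVec v) := Finset.sum_nonneg fun i _ => mul_self_nonneg _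
  have hq2 : 0 ≤ v ⬝ᵥ v := Finset.sum_nonneg fun i _ => mul_self_nonneg _
  have hvv : v ⬝ᵥ v = 0 := by
    rcases lt_or_eq_of_le hq2 with h | h
    · exfalso
      have : 0 < (Wᵀ.mulVec v) ⬝ᵥ (Wᵀ.mulVec v) + ((Fintype.card V : ℝ) - 2*(j0+1)) • (v ⬝ᵥ v) := by
        have := mul_pos hpos h
        rw [smul_eq_mul]
        linarith
      exact this.ne' h1
    · exact h.symm
  exact dotProduct_self_eq_zero.1 hvv

lemma incl_inj (h : ℕ) (h1 : 1 ≤ h) : ∀ k, h ≤ k → 2*k ≤ Fintype.card V →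
    ∀ v : {s : Finset V // s.card = h} → ℝ,
      (inclMatrix V h k).mulVec v = 0 → v = 0 := by
  intro k
  induction k with
  | zero => intro hk; omega
  | succ k ih =>
    intro hk hn v hv
    rcases Nat.lt_or_ge h (k+1) with hlt | hge
    · -- h ≤ k, use chain and Ustep
      have hhk : h ≤ k := by omega
      obtain ⟨j0, rfl⟩ : ∃ j0, k = j0 + 1 := ⟨k - 1, by omega⟩
      have hch := chain (V := V) h (j0+1) hhk
      have hz : (inclMatrix V (j0+1) (j0+2)).mulVec ((inclMatrix V h (j0+1)).mulVec v) = 0 := by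
        rw [Matrix.mulVec_mulVec, hch, Matrix.smul_mulVec, hv, smul_zero]
      have := Ustep j0 (by omega) _ hz
      exact ih hhk (by omega) v this
    · -- h = k+1: identity
      have heq : k + 1 = h := by omega
      subst heq
      have hid : inclMatrix V (k+1) (k+1) = (1 : Matrix _ _ ℝ) := by
        ext A X
        rw [Matrix.one_apply]
        unfold inclMatrix
        by_cases hAX : A = X
        · subst hAX
          rw [if_pos (Finset.Subset.rfl), if_pos rfl]
        · rw [if_neg hAX]
          by_cases hsub : X.1 ⊆ A.1
          · exfalso
            exact hAX (Subtype.ext (Finset.eq_of_subset_of_card_le hsub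
              (by rw [X.2, A.2])).symm)
          · rw [if_neg hsub]
      rw [hid, Matrix.one_mulVec] at hv
      exact hv

end TokenAux
end

noncomputable section

theorem stmt_0 {n h k : ℕ} (G : SimpleGraph (Fin n)) (h1 : 1 ≤ h) (hhk : h < k)
    (hk : k ≤ n / 2) (lam : ℝ) (v : {s : Finset (Fin n) // s.card = h} → ℝ)
    (hv : v ≠ 0) (heig : (lapMat (tokenGraph G h)).mulVec v = lam • v) :
    (inclMatrix (Fin n) h k).mulVec v ≠ 0 ∧
      (lapMat (tokenGraph G k)).mulVec ((inclMatrix (Fin n) h k).mulVec v) =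
        lam • ((inclMatrix (Fin n) h k).mulVec v) := by
  letI : DecidableRel G.Adj := Classical.decRel _
  obtain ⟨h0, rfl⟩ : ∃ h0, h = h0 + 1 := ⟨h - 1, by omega⟩
  have h2k : 2 * k ≤ n := by
    have := (Nat.le_div_iff_mul_le (by norm_num : 0 < 2)).1 hk
    omega
  constructor
  · intro hzero
    exact hv (TokenAux.incl_inj (h0+1) (by omega) k (by omega)
      (by simpa using h2k) v hzero)
  · rw [TokenAux.comm_apply G v, heig, Matrix.mulVec_smul]

end
end

section
/- Let G be a simple graph on n vertices and let h, k be integers with 1 ≤ h < k ≤ n/2. If u is an eigenvector of the Laplacian matrix L(F_k(G)) with eigenvalue λ and Bᵀu ≠ 0, then Bᵀu is an eigenvector of the Laplacian matrix L(F_h(G)) with the same eigenvalue λ, where B is the inclusion matrix from h-subsets to k-subsets. -/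
open Finset Polynomial Real Matrix

noncomputable section

variable {n : ℕ} {G : SimpleGraph (Fin n)}

lemma symmDiff_pair_eq {X : Finset (Fin n)} {a b : Fin n} (hab : a ≠ b)
    (ha : a ∈ X) (hb : b ∉ X) : symmDiff X {a, b} = insert b (X.erase a) := by
  ext x
  simp only [Finset.mem_symmDiff, Finset.mem_insert, Finset.mem_erase, Finset.mem_singleton]
  by_cases hxa : x = a <;> by_cases hxb : x = b <;> subst_vars <;> tauto

lemma card_symmDiff_pair {X : Finset (Fin n)} {a b : Fin n} (hab : a ≠ b)
    (ha : a ∈ X) (hb : b ∉ X) : (symmDiff X {a, b}).card = X.card := by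
  rw [symmDiff_pair_eq hab ha hb, Finset.card_insert_of_notMem (by simp [hb]),
    Finset.card_erase_of_mem ha]
  have := Finset.card_pos.mpr ⟨a, ha⟩; omega

lemma mem_symmDiff_pair_left {X : Finset (Fin n)} {a b : Fin n} (ha : a ∈ X) :
    a ∉ symmDiff X {a, b} := by
  simp [Finset.mem_symmDiff, ha]

lemma mem_symmDiff_pair_right {X : Finset (Fin n)} {a b : Fin n} (hb : b ∉ X) :
    b ∈ symmDiff X {a, b} := by
  simp [Finset.mem_symmDiff, hb]

lemma tokenGraph_adj_swap {m : ℕ} (X : {s : Finset (Fin n) // s.card = m}) {a b : Fin n}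
    (hadj : G.Adj a b) (ha : a ∈ X.1) (hb : b ∉ X.1) :
    (tokenGraph G m).Adj X ⟨symmDiff X.1 {a, b},
      by rw [card_symmDiff_pair hadj.ne ha hb, X.2]⟩ :=
  ⟨a, b, hadj, ha, mem_symmDiff_pair_right hb, symmDiff_symmDiff_cancel_left _ _⟩

lemma tokenGraph_adj_elim {m : ℕ} {X Y : {s : Finset (Fin n) // s.card = m}}
    (hXY : (tokenGraph G m).Adj X Y) :
    ∃ a b, G.Adj a b ∧ a ∈ X.1 ∧ b ∉ X.1 ∧ a ∉ Y.1 ∧ b ∈ Y.1 ∧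
      Y.1 = symmDiff X.1 {a, b} := by
  obtain ⟨a, b, hadj, ha, hb, hd⟩ := hXY
  have hbX : b ∉ X.1 := by
    have : b ∈ symmDiff X.1 Y.1 := by rw [hd]; simp
    rw [Finset.mem_symmDiff] at this; tauto
  have haY : a ∉ Y.1 := by
    have : a ∈ symmDiff X.1 Y.1 := by rw [hd]; simp
    rw [Finset.mem_symmDiff] at this; tauto
  exact ⟨a, b, hadj, ha, hbX, haY, hb, by rw [← hd, symmDiff_symmDiff_cancel_left]⟩

/-- Forward transfer: from a neighbor `Y` of `X` (crossing `A`) to a neighbor `C` of `A`. -/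
lemma fwd {h k : ℕ} (X : {s : Finset (Fin n) // s.card = h})
    (A : {s : Finset (Fin n) // s.card = k}) (Y : {s : Finset (Fin n) // s.card = h})
    (h1 : (tokenGraph G h).Adj X Y) (h2 : ¬(X.1 ⊆ A.1 ↔ Y.1 ⊆ A.1)) :
    ∃ hc : (symmDiff A.1 (symmDiff X.1 Y.1)).card = k,
      (tokenGraph G k).Adj A ⟨symmDiff A.1 (symmDiff X.1 Y.1), hc⟩ ∧
      (Y.1 ⊆ A.1 ↔ X.1 ⊆ symmDiff A.1 (symmDiff X.1 Y.1)) := by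
  obtain ⟨a, b, hadj, haX, hbX, haY, hbY, hYeq⟩ := tokenGraph_adj_elim h1
  have hD : symmDiff X.1 Y.1 = {a, b} := by
    rw [hYeq, symmDiff_symmDiff_cancel_left]
  rw [hD]
  by_cases hXA : X.1 ⊆ A.1
  · have hYA : ¬ Y.1 ⊆ A.1 := fun hy => h2 ⟨fun _ => hy, fun _ => hXA⟩
    have haA : a ∈ A.1 := hXA haX
    have hbA : b ∉ A.1 := by
      intro hbA
      apply hYA
      rw [hYeq, symmDiff_pair_eq hadj.ne haX hbX]
      exact Finset.insert_subset hbA ((Finset.erase_subset _ _).trans hXA)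
    refine ⟨by rw [card_symmDiff_pair hadj.ne haA hbA, A.2], ?_, ?_⟩
    · exact tokenGraph_adj_swap A hadj haA hbA
    · exact iff_of_false hYA (fun hs => mem_symmDiff_pair_left haA (hs haX))
  · have hYA : Y.1 ⊆ A.1 := by
      by_contra hq; exact h2 (iff_of_false hXA hq)
    have hbA : b ∈ A.1 := hYA hbY
    have haA : a ∉ A.1 := by
      intro haA
      apply hXA
      have hXeq : X.1 = symmDiff Y.1 {a, b} := by
        rw [← hD, symmDiff_comm X.1, symmDiff_symmDiff_cancel_left]
      rw [hXeq, Finset.pair_comm, symmDiff_pair_eq hadj.ne.symm hbY haY]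
      exact Finset.insert_subset haA ((Finset.erase_subset _ _).trans hYA)
    rw [Finset.pair_comm]
    refine ⟨by rw [card_symmDiff_pair hadj.ne.symm hbA haA, A.2], ?_, ?_⟩
    · exact tokenGraph_adj_swap A hadj.symm hbA haA
    · refine iff_of_true hYA ?_
      have hXeq : X.1 = symmDiff Y.1 {a, b} := by
        rw [← hD, symmDiff_comm X.1, symmDiff_symmDiff_cancel_left]
      rw [hXeq, Finset.pair_comm, symmDiff_pair_eq hadj.ne.symm hbY haY,
        symmDiff_pair_eq hadj.ne.symm hbA haA]
      exact Finset.insert_subset (Finset.mem_insert_self _ _)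
        ((Finset.erase_subset_erase _ hYA).trans (Finset.subset_insert _ _))

/-- Backward transfer: from a neighbor `C` of `A` to a neighbor `Y` of `X`. -/
lemma bwd {h k : ℕ} (X : {s : Finset (Fin n) // s.card = h})
    (A C : {s : Finset (Fin n) // s.card = k})
    (h1 : (tokenGraph G k).Adj A C) (h2 : ¬(X.1 ⊆ A.1 ↔ X.1 ⊆ C.1)) :
    ∃ hc : (symmDiff X.1 (symmDiff A.1 C.1)).card = h,
      (tokenGraph G h).Adj X ⟨symmDiff X.1 (symmDiff A.1 C.1), hc⟩ ∧
      (symmDiff X.1 (symmDiff A.1 C.1) ⊆ A.1 ↔ X.1 ⊆ C.1) := by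
  obtain ⟨a, b, hadj, haA, hbA, haC, hbC, hCeq⟩ := tokenGraph_adj_elim h1
  have hD : symmDiff A.1 C.1 = {a, b} := by
    rw [hCeq, symmDiff_symmDiff_cancel_left]
  have hCins : C.1 = insert b (A.1.erase a) := by
    rw [hCeq, symmDiff_pair_eq hadj.ne haA hbA]
  rw [hD]
  by_cases hXA : X.1 ⊆ A.1
  · have hXC : ¬ X.1 ⊆ C.1 := fun hc => h2 ⟨fun _ => hc, fun _ => hXA⟩
    have haX : a ∈ X.1 := by
      by_contra haX
      apply hXC
      rw [hCins]
      exact fun x hx => Finset.mem_insert_of_mem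
        (Finset.mem_erase.mpr ⟨fun he => haX (he ▸ hx), hXA hx⟩)
    have hbX : b ∉ X.1 := fun hbX => hbA (hXA hbX)
    refine ⟨by rw [card_symmDiff_pair hadj.ne haX hbX, X.2], ?_, ?_⟩
    · exact tokenGraph_adj_swap X hadj haX hbX
    · exact iff_of_false
        (fun hs => hbA (hs (mem_symmDiff_pair_right hbX))) hXC
  · have hXC : X.1 ⊆ C.1 := by
      by_contra hq; exact h2 (iff_of_false hXA hq)
    have hbX : b ∈ X.1 := by
      by_contra hbX
      apply hXA
      intro x hx
      have := hXC hx
      rw [hCins, Finset.mem_insert] at this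
      rcases this with h | h
      · exact absurd (h ▸ hx) hbX
      · exact Finset.mem_of_mem_erase h
    have haX : a ∉ X.1 := fun haX => haC (hXC haX)
    rw [Finset.pair_comm]
    refine ⟨by rw [card_symmDiff_pair hadj.ne.symm hbX haX, X.2], ?_, ?_⟩
    · exact tokenGraph_adj_swap X hadj.symm hbX haX
    · refine iff_of_true ?_ hXC
      rw [symmDiff_pair_eq hadj.ne.symm hbX haX]
      refine Finset.insert_subset haA (fun x hx => ?_)
      rw [Finset.mem_erase] at hx
      have := hXC hx.2
      rw [hCins, Finset.mem_insert] at this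
      rcases this with h | h
      · exact absurd h hx.1
      · exact Finset.mem_of_mem_erase h


/-- The key sum identity. -/
lemma star {h k : ℕ} [DecidableRel (tokenGraph G h).Adj] [DecidableRel (tokenGraph G k).Adj]
    (X : {s : Finset (Fin n) // s.card = h}) (A : {s : Finset (Fin n) // s.card = k}) :
    ∑ Y : {s : Finset (Fin n) // s.card = h}, (if (tokenGraph G h).Adj X Y then (1:ℝ) else 0) *
        ((if X.1 ⊆ A.1 then (1:ℝ) else 0) - (if Y.1 ⊆ A.1 then 1 else 0))
    = ∑ C : {s : Finset (Fin n) // s.card = k}, (if (tokenGraph G k).Adj C A then (1:ℝ) else 0) *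
        ((if X.1 ⊆ A.1 then (1:ℝ) else 0) - (if X.1 ⊆ C.1 then 1 else 0)) := by
  classical
  rw [← Finset.sum_filter_of_ne (p := fun Y => (tokenGraph G h).Adj X Y ∧
      ¬(X.1 ⊆ A.1 ↔ Y.1 ⊆ A.1)) ?hl,
    ← Finset.sum_filter_of_ne (p := fun C => (tokenGraph G k).Adj A C ∧
      ¬(X.1 ⊆ A.1 ↔ X.1 ⊆ C.1)) ?hr]
  case hl =>
    intro Y _ hne
    by_cases hadj : (tokenGraph G h).Adj X Y
    · refine ⟨hadj, fun hiff => hne ?_⟩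
      rw [if_congr hiff rfl rfl, sub_self, mul_zero]
    · exact absurd (by rw [if_neg hadj, zero_mul]) hne
  case hr =>
    intro C _ hne
    by_cases hadj : (tokenGraph G k).Adj A C
    · refine ⟨hadj, fun hiff => hne ?_⟩
      rw [if_congr hiff rfl rfl, sub_self, mul_zero]
    · exact absurd (by rw [if_neg (fun hs => hadj hs.symm), zero_mul]) hne
  refine Finset.sum_bij'
    (fun Y hY => (⟨symmDiff A.1 (symmDiff X.1 Y.1),
      (fwd X A Y (Finset.mem_filter.mp hY).2.1 (Finset.mem_filter.mp hY).2.2).choose⟩ :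
        {s : Finset (Fin n) // s.card = k}))
    (fun C hC => (⟨symmDiff X.1 (symmDiff A.1 C.1),
      (bwd X A C (Finset.mem_filter.mp hC).2.1 (Finset.mem_filter.mp hC).2.2).choose⟩ :
        {s : Finset (Fin n) // s.card = h}))
    ?_ ?_ ?_ ?_ ?_
  · intro Y hY
    obtain ⟨h1, h2⟩ := (Finset.mem_filter.mp hY).2
    obtain ⟨hadj, hiff⟩ := (fwd X A Y h1 h2).choose_spec
    exact Finset.mem_filter.mpr ⟨Finset.mem_univ _,
      hadj, fun hif => h2 (hif.trans hiff.symm)⟩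
  · intro C hC
    obtain ⟨h1, h2⟩ := (Finset.mem_filter.mp hC).2
    obtain ⟨hadj, hiff⟩ := (bwd X A C h1 h2).choose_spec
    exact Finset.mem_filter.mpr ⟨Finset.mem_univ _,
      hadj, fun hif => h2 (hif.trans hiff)⟩
  · intro Y hY
    exact Subtype.ext (by simp [symmDiff_symmDiff_cancel_left])
  · intro C hC
    exact Subtype.ext (by simp [symmDiff_symmDiff_cancel_left])
  · intro Y hY
    obtain ⟨h1, h2⟩ := (Finset.mem_filter.mp hY).2
    obtain ⟨hadj, hiff⟩ := (fwd X A Y h1 h2).choose_spec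
    rw [if_pos h1, if_pos hadj.symm, if_congr hiff rfl rfl]


lemma lapMat_apply {V : Type*} [Fintype V] [DecidableEq V] (G : SimpleGraph V)
    [DecidableRel G.Adj] (i j : V) :
    lapMat G i j = (if i = j then (G.degree i : ℝ) else 0) - (if G.Adj i j then 1 else 0) := by
  unfold lapMat SimpleGraph.lapMatrix SimpleGraph.degMatrix SimpleGraph.adjMatrix
  rw [Matrix.sub_apply, Matrix.diagonal_apply, Matrix.of_apply]
  congr!

/-- Commutation: `L(F_h) * Bᵀ = Bᵀ * L(F_k)`. -/
lemma lap_comm (G : SimpleGraph (Fin n)) (h k : ℕ) :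
    lapMat (tokenGraph G h) * (inclMatrix (Fin n) h k)ᵀ
      = (inclMatrix (Fin n) h k)ᵀ * lapMat (tokenGraph G k) := by
  classical
  ext X A
  rw [Matrix.mul_apply, Matrix.mul_apply]
  simp only [lapMat_apply, Matrix.transpose_apply, inclMatrix]
  have e1 : ∑ Y : {s : Finset (Fin n) // s.card = h},
      ((if X = Y then ((tokenGraph G h).degree X : ℝ) else 0) -
        (if (tokenGraph G h).Adj X Y then 1 else 0)) * (if Y.1 ⊆ A.1 then 1 else 0)
      = ∑ Y : {s : Finset (Fin n) // s.card = h},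
        (if (tokenGraph G h).Adj X Y then (1:ℝ) else 0) *
          ((if X.1 ⊆ A.1 then (1:ℝ) else 0) - (if Y.1 ⊆ A.1 then 1 else 0)) := by
    rw [SimpleGraph.degree_eq_sum_if_adj (R := ℝ)]
    simp only [sub_mul, ite_mul, zero_mul, mul_sub]
    rw [Finset.sum_sub_distrib, Finset.sum_sub_distrib, Finset.sum_ite_eq]
    simp only [Finset.mem_univ, if_pos, Finset.sum_mul]
    congr 1
    exact Finset.sum_congr rfl fun Y _ => by split_ifs <;> ring
  have e2 : ∑ C : {s : Finset (Fin n) // s.card = k},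
      (if X.1 ⊆ C.1 then (1:ℝ) else 0) *
        ((if C = A then ((tokenGraph G k).degree C : ℝ) else 0) -
          (if (tokenGraph G k).Adj C A then 1 else 0))
      = ∑ C : {s : Finset (Fin n) // s.card = k},
        (if (tokenGraph G k).Adj C A then (1:ℝ) else 0) *
          ((if X.1 ⊆ A.1 then (1:ℝ) else 0) - (if X.1 ⊆ C.1 then 1 else 0)) := by
    have hdeg : ((tokenGraph G k).degree A : ℝ)
        = ∑ C : {s : Finset (Fin n) // s.card = k},
            (if (tokenGraph G k).Adj C A then (1:ℝ) else 0) := by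
      rw [SimpleGraph.degree_eq_sum_if_adj (R := ℝ)]
      exact Finset.sum_congr rfl fun C _ =>
        if_congr ((tokenGraph G k).adj_comm A C) rfl rfl
    simp only [mul_sub, mul_ite, mul_one, mul_zero]
    rw [Finset.sum_sub_distrib, Finset.sum_ite_eq']
    simp only [Finset.mem_univ, if_pos]
    rw [hdeg, Finset.mul_sum, ← Finset.sum_sub_distrib]
    refine Finset.sum_congr rfl fun C _ => ?_
    split_ifs <;> ring
  rw [e1, e2]
  exact star X A


theorem stmt_1 {n h k : ℕ} (G : SimpleGraph (Fin n)) (h1 : 1 ≤ h) (hhk : h < k)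
    (hk : k ≤ n / 2) (lam : ℝ) (u : {s : Finset (Fin n) // s.card = k} → ℝ)
    (hu : u ≠ 0) (heig : (lapMat (tokenGraph G k)).mulVec u = lam • u)
    (hBu : (inclMatrix (Fin n) h k)ᵀ.mulVec u ≠ 0) :
    (lapMat (tokenGraph G h)).mulVec ((inclMatrix (Fin n) h k)ᵀ.mulVec u) =
      lam • ((inclMatrix (Fin n) h k)ᵀ.mulVec u) := by
  rw [Matrix.mulVec_mulVec, lap_comm G h k, ← Matrix.mulVec_mulVec, heig,
    Matrix.mulVec_smul]

end
end

section
/- Let G be a simple graph on n vertices and let k be an integer with 2 ≤ k ≤ n/2. Then α(F_k(G)) ≤ α(F_{k−1}(G)); consequently α(G) ≥ α(F_2(G)) ≥ α(F_3(G)) ≥ ⋯ ≥ α(F_{⌊n/2⌋}(G)). -/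
open Finset Polynomial Real Matrix

noncomputable section

namespace TokenProof
open Finset

variable {V : Type*} [Fintype V] [DecidableEq V]

/-- The `k`-subsets of `V`. -/
abbrev KSet (V : Type*) (k : ℕ) := {s : Finset V // s.card = k}

/-- Move a token from `a` to `b`. -/
def mvs (a b : V) (s : Finset V) : Finset V := insert b (s.erase a)

lemma mvs_card {a b : V} {s : Finset V} (ha : a ∈ s) (hb : b ∉ s) :
    (mvs a b s).card = s.card := by
  unfold mvs
  rw [card_insert_of_notMem (fun h => hb (mem_of_mem_erase h)), card_erase_of_mem ha]
  have : 1 ≤ s.card := card_pos.2 ⟨a, ha⟩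
  omega

lemma mvs_inj {a b a' b' : V} {s : Finset V} (ha : a ∈ s) (hb : b ∉ s)
    (ha' : a' ∈ s) (hb' : b' ∉ s) (h : mvs a b s = mvs a' b' s) : a = a' ∧ b = b' := by
  unfold mvs at h
  have hbb : b = b' := by
    have hmem : b ∈ insert b' (s.erase a') := h ▸ mem_insert_self b (s.erase a)
    rcases mem_insert.1 hmem with h1 | h1
    · exact h1
    · exact absurd (mem_of_mem_erase h1) hb
  subst hbb
  refine ⟨?_, rfl⟩
  by_contra hne
  have haa : a ∈ s.erase a' := mem_erase.2 ⟨hne, ha⟩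
  have : a ∈ insert b (s.erase a) := h ▸ mem_insert_of_mem haa
  rcases mem_insert.1 this with h1 | h1
  · exact hb (h1 ▸ ha)
  · exact (notMem_erase a s) h1

lemma adj_tokenGraph_iff {G : SimpleGraph V} {k : ℕ} {A C : KSet V k} :
    (tokenGraph G k).Adj A C ↔
      ∃ a b, G.Adj a b ∧ a ∈ A.1 ∧ b ∉ A.1 ∧ C.1 = mvs a b A.1 := by
  constructor
  · rintro ⟨a, b, hab, ha, hb, hd⟩
    have hne : a ≠ b := hab.ne
    have hbA : b ∉ A.1 := by
      intro hbA
      have hmem : b ∈ symmDiff A.1 C.1 := by rw [hd]; simp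
      rw [Finset.mem_symmDiff] at hmem
      tauto
    have haC : a ∉ C.1 := by
      intro haC
      have hmem : a ∈ symmDiff A.1 C.1 := by rw [hd]; simp
      rw [Finset.mem_symmDiff] at hmem
      tauto
    refine ⟨a, b, hab, ha, hbA, ?_⟩
    ext x
    simp only [mvs, mem_insert, mem_erase]
    rcases eq_or_ne x b with rfl | hxb
    · simp [hb]
    rcases eq_or_ne x a with rfl | hxa
    · simp only [hne, false_or]
      constructor
      · intro h; exact absurd h haC
      · rintro ⟨h, _⟩; exact absurd rfl h
    · have hx : ¬ (x ∈ A.1 ∧ x ∉ C.1 ∨ x ∈ C.1 ∧ x ∉ A.1) := by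
        rw [← Finset.mem_symmDiff, hd]
        simp [hxa, hxb]
      simp only [hxb, false_or]
      constructor
      · intro hxC
        refine ⟨hxa, ?_⟩
        by_contra hxA
        exact hx (Or.inr ⟨hxC, hxA⟩)
      · rintro ⟨_, hxA⟩
        by_contra hxC
        exact hx (Or.inl ⟨hxA, hxC⟩)
  · rintro ⟨a, b, hab, ha, hb, hC⟩
    have hne : a ≠ b := hab.ne
    refine ⟨a, b, hab, ha, by rw [hC]; exact mem_insert_self b _, ?_⟩
    ext x
    rw [Finset.mem_symmDiff, hC]
    simp only [mvs, mem_insert, mem_erase, mem_singleton]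
    rcases eq_or_ne x b with rfl | hxb
    · simp [hb]
    rcases eq_or_ne x a with rfl | hxa
    · simp [ha, hne, hxb]
    · simp [hxa, hxb]

end TokenProof
namespace TokenProof
variable {V : Type*} [Fintype V] [DecidableEq V]
open Finset

/-- Extend a function on `k`-subsets to all finsets by zero. -/
def extF (k : ℕ) (f : KSet V k → ℝ) : Finset V → ℝ :=
  fun s => if h : s.card = k then f ⟨s, h⟩ else 0

lemma extF_val {k : ℕ} (f : KSet V k → ℝ) (A : KSet V k) : extF k f A.1 = f A := by
  simp [extF, A.2]

lemma extF_eq {k : ℕ} (f : KSet V k → ℝ) {s : Finset V} (hs : s.card = k) :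
    extF k f s = f ⟨s, hs⟩ := by simp [extF, hs]

/-- `lapMat` of the token graph acts as a sum over the ordered adjacent pairs of `G`. -/
lemma lapMat_mulVec_eq (G : SimpleGraph V) [DecidableRel G.Adj] (k : ℕ)
    (f : KSet V k → ℝ) (A : KSet V k) :
    (lapMat (tokenGraph G k) *ᵥ f) A
      = ∑ p ∈ univ.filter (fun p : V × V => G.Adj p.1 p.2),
          (if p.1 ∈ A.1 ∧ p.2 ∉ A.1 then f A - extF k f (mvs p.1 p.2 A.1) else 0) := by
  classical
  have hlap : (lapMat (tokenGraph G k) *ᵥ f) A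
      = ((tokenGraph G k).degree A : ℝ) * f A
        - ∑ u ∈ (tokenGraph G k).neighborFinset A, f u := by
    letI := Classical.decRel (tokenGraph G k).Adj
    exact SimpleGraph.lapMatrix_mulVec_apply _ _ _
  rw [hlap]
  have hsplit : ∀ p : V × V,
      (if p.1 ∈ A.1 ∧ p.2 ∉ A.1 then f A - extF k f (mvs p.1 p.2 A.1) else 0)
        = (if p.1 ∈ A.1 ∧ p.2 ∉ A.1 then (1:ℝ) else 0) * f A
            - (if p.1 ∈ A.1 ∧ p.2 ∉ A.1 then extF k f (mvs p.1 p.2 A.1) else 0) := by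
    intro p
    by_cases h : p.1 ∈ A.1 ∧ p.2 ∉ A.1 <;> simp [h]
  simp only [hsplit]
  rw [Finset.sum_sub_distrib, ← Finset.sum_mul]
  rw [← Finset.sum_filter, ← Finset.sum_filter, Finset.filter_filter]
  set Pc := univ.filter (fun p : V × V => G.Adj p.1 p.2 ∧ p.1 ∈ A.1 ∧ p.2 ∉ A.1) with hPc
  have hmem : ∀ p : V × V, p ∈ Pc ↔ G.Adj p.1 p.2 ∧ p.1 ∈ A.1 ∧ p.2 ∉ A.1 := by
    intro p; simp [hPc]
  have hdeg : ((tokenGraph G k).degree A : ℝ) = ∑ _p ∈ Pc, (1:ℝ) := by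
    rw [Finset.sum_const, nsmul_eq_mul, mul_one]
    norm_cast
    rw [← SimpleGraph.card_neighborFinset_eq_degree]
    refine (Finset.card_bij (fun p hp => (⟨mvs p.1 p.2 A.1, by
        rcases (hmem p).1 hp with ⟨_, h1, h2⟩
        rw [mvs_card h1 h2]; exact A.2⟩ : KSet V k)) ?_ ?_ ?_).symm
    · intro p hp
      rcases (hmem p).1 hp with ⟨hadj, h1, h2⟩
      rw [SimpleGraph.mem_neighborFinset]
      exact adj_tokenGraph_iff.2 ⟨p.1, p.2, hadj, h1, h2, rfl⟩
    · intro p hp q hq hpq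
      rcases (hmem p).1 hp with ⟨_, h1, h2⟩
      rcases (hmem q).1 hq with ⟨_, h3, h4⟩
      have := mvs_inj h1 h2 h3 h4 (congrArg Subtype.val hpq)
      exact Prod.ext this.1 this.2
    · intro C hC
      rw [SimpleGraph.mem_neighborFinset] at hC
      rcases adj_tokenGraph_iff.1 hC with ⟨a, b, hadj, h1, h2, hCv⟩
      exact ⟨(a, b), (hmem _).2 ⟨hadj, h1, h2⟩, Subtype.ext hCv.symm⟩
  have hsum : ∑ p ∈ Pc, extF k f (mvs p.1 p.2 A.1)
      = ∑ u ∈ (tokenGraph G k).neighborFinset A, f u := by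
    refine Finset.sum_bij (fun p hp => (⟨mvs p.1 p.2 A.1, by
        rcases (hmem p).1 hp with ⟨_, h1, h2⟩
        rw [mvs_card h1 h2]; exact A.2⟩ : KSet V k)) ?_ ?_ ?_ ?_
    · intro p hp
      rcases (hmem p).1 hp with ⟨hadj, h1, h2⟩
      rw [SimpleGraph.mem_neighborFinset]
      exact adj_tokenGraph_iff.2 ⟨p.1, p.2, hadj, h1, h2, rfl⟩
    · intro p hp q hq hpq
      rcases (hmem p).1 hp with ⟨_, h1, h2⟩
      rcases (hmem q).1 hq with ⟨_, h3, h4⟩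
      have := mvs_inj h1 h2 h3 h4 (congrArg Subtype.val hpq)
      exact Prod.ext this.1 this.2
    · intro C hC
      rw [SimpleGraph.mem_neighborFinset] at hC
      rcases adj_tokenGraph_iff.1 hC with ⟨a, b, hadj, h1, h2, hCv⟩
      exact ⟨(a, b), (hmem _).2 ⟨hadj, h1, h2⟩, Subtype.ext hCv.symm⟩
    · intro p hp
      exact (extF_val f _).symm ▸ rfl
  rw [hsum, hdeg]

end TokenProof
namespace TokenProof
variable {V : Type*} [Fintype V] [DecidableEq V]
open Finset

lemma incl_mulVec {k : ℕ} (f : KSet V k → ℝ) (C : KSet V (k+1)) :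
    (inclMatrix V k (k+1) *ᵥ f) C = ∑ x ∈ C.1, extF k f (C.1.erase x) := by
  classical
  have : (inclMatrix V k (k+1) *ᵥ f) C
      = ∑ X ∈ univ.filter (fun X : KSet V k => X.1 ⊆ C.1), f X := by
    rw [Finset.sum_filter]
    simp [Matrix.mulVec, inclMatrix, dotProduct, ite_mul]
  rw [this]
  refine (Finset.sum_bij (fun (x : V) (hx : x ∈ C.1) =>
      (⟨C.1.erase x, by rw [card_erase_of_mem hx, C.2]; omega⟩ : KSet V k)) ?_ ?_ ?_ ?_).symm
  · intro x hx
    simp only [mem_filter, mem_univ, true_and]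
    exact erase_subset _ _
  · intro x hx y hy hxy
    have h : C.1.erase x = C.1.erase y := congrArg Subtype.val hxy
    by_contra hne
    have hmem : x ∈ C.1.erase y := mem_erase.2 ⟨hne, hx⟩
    rw [← h] at hmem
    exact (notMem_erase x C.1) hmem
  · intro X hX
    simp only [mem_filter, mem_univ, true_and] at hX
    have hcard : (C.1 \ X.1).card = 1 := by
      rw [card_sdiff_of_subset hX, C.2, X.2]; omega
    rcases Finset.card_eq_one.1 hcard with ⟨x, hx⟩
    have hxC : x ∈ C.1 := by
      have : x ∈ C.1 \ X.1 := hx ▸ mem_singleton_self x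
      exact (mem_sdiff.1 this).1
    have hxX : x ∉ X.1 := by
      have : x ∈ C.1 \ X.1 := hx ▸ mem_singleton_self x
      exact (mem_sdiff.1 this).2
    refine ⟨x, hxC, ?_⟩
    refine Subtype.ext ?_
    ext y
    simp only [mem_erase]
    constructor
    · rintro ⟨hyx, hyC⟩
      by_contra hyX
      have : y ∈ C.1 \ X.1 := mem_sdiff.2 ⟨hyC, hyX⟩
      rw [hx, mem_singleton] at this
      exact hyx this
    · intro hyX
      refine ⟨fun h => hxX (h ▸ hyX), hX hyX⟩
  · intro x hx
    have hc : ((C.1).erase x).card = k := by rw [card_erase_of_mem hx, C.2]; omega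
    exact extF_eq f hc

/-- Sum over deletions; `UF F s = ∑ x ∈ s, F (s.erase x)`. -/
def UF (F : Finset V → ℝ) (s : Finset V) : ℝ := ∑ x ∈ s, F (s.erase x)

lemma mvs_erase_comm {a b x : V} {s : Finset V} (hxa : x ≠ a) (hxb : x ≠ b) :
    mvs a b (s.erase x) = (mvs a b s).erase x := by
  unfold mvs
  rw [show (s.erase x).erase a = (s.erase a).erase x from Finset.erase_right_comm,
    Finset.erase_insert_of_ne hxb.symm]

lemma helper1 {F : Finset V → ℝ} {s : Finset V} {a b : V} (hab : a ≠ b)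
    (ha : a ∈ s) (hb : b ∉ s) :
    ∑ x ∈ s, (if a ∈ s.erase x ∧ b ∉ s.erase x
        then F (s.erase x) - F (mvs a b (s.erase x)) else 0)
      = UF F s - UF F (mvs a b s) := by
  have hguard : ∀ x ∈ s, (a ∈ s.erase x ∧ b ∉ s.erase x) ↔ x ≠ a := by
    intro x hx
    constructor
    · rintro ⟨h1, _⟩ rfl; exact (notMem_erase x s) h1
    · intro hxa
      exact ⟨mem_erase.2 ⟨fun h => hxa h.symm, ha⟩, fun h => hb (mem_of_mem_erase h)⟩
  have h1 : ∑ x ∈ s, (if a ∈ s.erase x ∧ b ∉ s.erase x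
        then F (s.erase x) - F (mvs a b (s.erase x)) else 0)
      = ∑ x ∈ s.erase a, (F (s.erase x) - F ((mvs a b s).erase x)) := by
    rw [← Finset.sum_filter]
    have hfil : s.filter (fun x => a ∈ s.erase x ∧ b ∉ s.erase x) = s.erase a := by
      ext x
      constructor
      · intro hxf
        obtain ⟨hx, hc⟩ := mem_filter.1 hxf
        exact mem_erase.2 ⟨(hguard x hx).1 hc, hx⟩
      · intro hxe
        obtain ⟨hxa, hx⟩ := mem_erase.1 hxe
        exact mem_filter.2 ⟨hx, (hguard x hx).2 hxa⟩
    rw [hfil]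
    refine Finset.sum_congr rfl ?_
    intro x hx
    rw [mem_erase] at hx
    have hxb : x ≠ b := fun h => hb (h ▸ hx.2)
    rw [mvs_erase_comm hx.1 hxb]
  rw [h1, Finset.sum_sub_distrib]
  have hUs : UF F s = (∑ x ∈ s.erase a, F (s.erase x)) + F (s.erase a) := by
    unfold UF
    rw [Finset.sum_erase_add s _ ha]
  have hbe : b ∉ s.erase a := fun h => hb (mem_of_mem_erase h)
  have hUm : UF F (mvs a b s) = F (s.erase a) + ∑ x ∈ s.erase a, F ((mvs a b s).erase x) := by
    unfold UF mvs
    rw [Finset.sum_insert hbe]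
    congr 1
    rw [Finset.erase_insert hbe]
  rw [hUs, hUm]
  ring

lemma helper2 {F : Finset V → ℝ} {s : Finset V} {a b : V} (hab : a ≠ b)
    (ha : a ∈ s) (hb : b ∈ s) :
    ∑ x ∈ s, (if a ∈ s.erase x ∧ b ∉ s.erase x
        then F (s.erase x) - F (mvs a b (s.erase x)) else 0)
      = F (s.erase b) - F (s.erase a) := by
  have hterm : ∀ x ∈ s, (if a ∈ s.erase x ∧ b ∉ s.erase x
        then F (s.erase x) - F (mvs a b (s.erase x)) else 0)
      = (if x = b then F (s.erase b) - F (s.erase a) else 0) := by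
    intro x hx
    rcases eq_or_ne x b with rfl | hxb
    · simp only [if_pos rfl]
      have hcond : a ∈ s.erase x ∧ x ∉ s.erase x :=
        ⟨mem_erase.2 ⟨hab, ha⟩, notMem_erase x s⟩
      rw [if_pos hcond]
      congr 1
      unfold mvs
      rw [show (s.erase x).erase a = (s.erase a).erase x from Finset.erase_right_comm]
      exact congrArg F (Finset.insert_erase (mem_erase.2 ⟨fun h => hab h.symm, hx⟩))
    · rw [if_neg hxb, if_neg]
      rintro ⟨_, h2⟩
      exact h2 (mem_erase.2 ⟨fun h => hxb h.symm, hb⟩)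
  rw [Finset.sum_congr rfl hterm, Finset.sum_ite_eq' s b, if_pos hb]

lemma helper3 {F : Finset V → ℝ} {s : Finset V} {a b : V} (ha : a ∉ s) :
    ∑ x ∈ s, (if a ∈ s.erase x ∧ b ∉ s.erase x
        then F (s.erase x) - F (mvs a b (s.erase x)) else 0) = 0 := by
  refine Finset.sum_eq_zero ?_
  intro x hx
  rw [if_neg]
  rintro ⟨h1, _⟩
  exact ha (mem_of_mem_erase h1)

lemma keyIdentity (F : Finset V → ℝ) (s : Finset V) {a b : V} (hab : a ≠ b) :
    (if a ∈ s ∧ b ∉ s then UF F s - UF F (mvs a b s) else 0)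
      + (if b ∈ s ∧ a ∉ s then UF F s - UF F (mvs b a s) else 0)
    = (∑ x ∈ s, (if a ∈ s.erase x ∧ b ∉ s.erase x
          then F (s.erase x) - F (mvs a b (s.erase x)) else 0))
      + (∑ x ∈ s, (if b ∈ s.erase x ∧ a ∉ s.erase x
          then F (s.erase x) - F (mvs b a (s.erase x)) else 0)) := by
  by_cases ha : a ∈ s <;> by_cases hb : b ∈ s
  · rw [helper2 hab ha hb, helper2 hab.symm hb ha]
    rw [if_neg (fun h => h.2 hb), if_neg (fun h => h.2 ha)]
    ring
  · rw [helper1 hab ha hb, helper3 hb, if_pos ⟨ha, hb⟩, if_neg (fun h => hb h.1)]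
    try ring
  · rw [helper3 ha, helper1 hab.symm hb ha, if_neg (fun h => ha h.1), if_pos ⟨hb, ha⟩]
    try ring
  · rw [helper3 ha, helper3 hb, if_neg (fun h => ha h.1), if_neg (fun h => hb h.1)]
    try ring

end TokenProof
namespace TokenProof
variable {V : Type*} [Fintype V] [DecidableEq V]
open Finset

lemma antisym_sum (P : Finset (V × V)) (hP : ∀ p ∈ P, p.swap ∈ P)
    (T S : V × V → ℝ) (h : ∀ p ∈ P, T p + T p.swap = S p + S p.swap) :
    ∑ p ∈ P, T p = ∑ p ∈ P, S p := by
  have hswap : ∀ W : V × V → ℝ, ∑ p ∈ P, W p.swap = ∑ p ∈ P, W p := by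
    intro W
    refine Finset.sum_bij' (fun p _ => p.swap) (fun p _ => p.swap)
      (fun p hp => hP p hp) (fun p hp => hP p hp) ?_ ?_ ?_
    · intro p hp; simp
    · intro p hp; simp
    · intro p hp; rfl
  have h2 : (∑ p ∈ P, T p) + (∑ p ∈ P, T p) = (∑ p ∈ P, S p) + (∑ p ∈ P, S p) := by
    calc (∑ p ∈ P, T p) + (∑ p ∈ P, T p)
        = (∑ p ∈ P, T p) + (∑ p ∈ P, T p.swap) := by rw [hswap T]
      _ = ∑ p ∈ P, (T p + T p.swap) := (Finset.sum_add_distrib).symm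
      _ = ∑ p ∈ P, (S p + S p.swap) := Finset.sum_congr rfl h
      _ = (∑ p ∈ P, S p) + (∑ p ∈ P, S p.swap) := Finset.sum_add_distrib
      _ = (∑ p ∈ P, S p) + (∑ p ∈ P, S p) := by rw [hswap S]
  linarith

lemma comm_mulVec (G : SimpleGraph V) [DecidableRel G.Adj] (k : ℕ) (f : KSet V k → ℝ) :
    lapMat (tokenGraph G (k+1)) *ᵥ (inclMatrix V k (k+1) *ᵥ f)
      = inclMatrix V k (k+1) *ᵥ (lapMat (tokenGraph G k) *ᵥ f) := by
  classical
  funext A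
  have hL : (lapMat (tokenGraph G (k+1)) *ᵥ (inclMatrix V k (k+1) *ᵥ f)) A
      = ∑ p ∈ univ.filter (fun p : V × V => G.Adj p.1 p.2),
          (if p.1 ∈ A.1 ∧ p.2 ∉ A.1
            then UF (extF k f) A.1 - UF (extF k f) (mvs p.1 p.2 A.1) else 0) := by
    rw [lapMat_mulVec_eq]
    refine Finset.sum_congr rfl ?_
    intro p hp
    by_cases h : p.1 ∈ A.1 ∧ p.2 ∉ A.1
    · rw [if_pos h, if_pos h]
      have hcard : (mvs p.1 p.2 A.1).card = k+1 := by rw [mvs_card h.1 h.2]; exact A.2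
      rw [extF_eq _ hcard, incl_mulVec f A, incl_mulVec f ⟨mvs p.1 p.2 A.1, hcard⟩]
      rfl
    · rw [if_neg h, if_neg h]
  have hR : (inclMatrix V k (k+1) *ᵥ (lapMat (tokenGraph G k) *ᵥ f)) A
      = ∑ p ∈ univ.filter (fun p : V × V => G.Adj p.1 p.2), ∑ x ∈ A.1,
          (if p.1 ∈ A.1.erase x ∧ p.2 ∉ A.1.erase x
            then extF k f (A.1.erase x) - extF k f (mvs p.1 p.2 (A.1.erase x)) else 0) := by
    rw [incl_mulVec]
    rw [show ∑ x ∈ A.1, extF k (lapMat (tokenGraph G k) *ᵥ f) (A.1.erase x)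
        = ∑ x ∈ A.1, ∑ p ∈ univ.filter (fun p : V × V => G.Adj p.1 p.2),
            (if p.1 ∈ A.1.erase x ∧ p.2 ∉ A.1.erase x
              then extF k f (A.1.erase x) - extF k f (mvs p.1 p.2 (A.1.erase x)) else 0)
      from ?_, Finset.sum_comm]
    refine Finset.sum_congr rfl ?_
    intro x hx
    have hcard : (A.1.erase x).card = k := by rw [card_erase_of_mem hx, A.2]; omega
    rw [extF_eq _ hcard, lapMat_mulVec_eq]
    refine Finset.sum_congr rfl ?_
    intro p hp
    by_cases h : p.1 ∈ A.1.erase x ∧ p.2 ∉ A.1.erase x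
    · rw [if_pos h, if_pos h]
      rw [extF_eq f hcard]
    · rw [if_neg h, if_neg h]
  rw [hL, hR]
  refine antisym_sum _ ?_ _ _ ?_
  · intro p hp
    simp only [mem_filter, mem_univ, true_and] at hp ⊢
    exact hp.symm
  · intro p hp
    simp only [mem_filter, mem_univ, true_and] at hp
    exact keyIdentity (extF k f) A.1 hp.ne

end TokenProof
namespace TokenProof
variable {V : Type*} [Fintype V] [DecidableEq V]
open Finset

lemma card_subsets {k : ℕ} (C : KSet V (k+1)) :
    (univ.filter (fun X : KSet V k => X.1 ⊆ C.1)).card = k + 1 := by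
  classical
  suffices h : (univ.filter (fun X : KSet V k => X.1 ⊆ C.1)).card = C.1.card by
    rw [h, C.2]
  refine (Finset.card_bij (fun (x : V) (hx : x ∈ C.1) =>
      (⟨C.1.erase x, by rw [card_erase_of_mem hx, C.2]; omega⟩ : KSet V k)) ?_ ?_ ?_).symm
  · intro x hx
    simp only [mem_filter, mem_univ, true_and]
    exact erase_subset _ _
  · intro x hx y hy hxy
    have h : C.1.erase x = C.1.erase y := congrArg Subtype.val hxy
    by_contra hne
    have hmem : x ∈ C.1.erase y := mem_erase.2 ⟨hne, hx⟩
    rw [← h] at hmem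
    exact (notMem_erase x C.1) hmem
  · intro X hX
    simp only [mem_filter, mem_univ, true_and] at hX
    have hcard : (C.1 \ X.1).card = 1 := by rw [card_sdiff_of_subset hX, C.2, X.2]; omega
    rcases Finset.card_eq_one.1 hcard with ⟨x, hx⟩
    have hxm : x ∈ C.1 \ X.1 := hx ▸ mem_singleton_self x
    refine ⟨x, (mem_sdiff.1 hxm).1, ?_⟩
    refine Subtype.ext ?_
    ext y
    simp only [mem_erase]
    constructor
    · rintro ⟨hyx, hyC⟩
      by_contra hyX
      have : y ∈ C.1 \ X.1 := mem_sdiff.2 ⟨hyC, hyX⟩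
      rw [hx, mem_singleton] at this
      exact hyx this
    · intro hyX
      exact ⟨fun h => (mem_sdiff.1 hxm).2 (h ▸ hyX), hX hyX⟩

lemma card_supersets {k : ℕ} (X : KSet V k) :
    (univ.filter (fun A : KSet V (k+1) => X.1 ⊆ A.1)).card = Fintype.card V - k := by
  classical
  have hc : (X.1ᶜ).card = Fintype.card V - k := by rw [card_compl, X.2]
  rw [← hc]
  refine (Finset.card_bij (fun (y : V) (hy : y ∈ X.1ᶜ) =>
      (⟨insert y X.1, by
        rw [card_insert_of_notMem (mem_compl.1 hy), X.2]⟩ : KSet V (k+1))) ?_ ?_ ?_).symm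
  · intro y hy
    simp only [mem_filter, mem_univ, true_and]
    exact subset_insert _ _
  · intro y hy z hz hyz
    have h : insert y X.1 = insert z X.1 := congrArg Subtype.val hyz
    by_contra hne
    have : y ∈ insert z X.1 := h ▸ mem_insert_self y X.1
    rcases mem_insert.1 this with h1 | h1
    · exact hne h1
    · exact (mem_compl.1 hy) h1
  · intro A hA
    simp only [mem_filter, mem_univ, true_and] at hA
    have hcard : (A.1 \ X.1).card = 1 := by rw [card_sdiff_of_subset hA, A.2, X.2]; omega
    rcases Finset.card_eq_one.1 hcard with ⟨y, hy⟩
    have hym : y ∈ A.1 \ X.1 := hy ▸ mem_singleton_self y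
    refine ⟨y, mem_compl.2 (mem_sdiff.1 hym).2, Subtype.ext ?_⟩
    ext z
    simp only [mem_insert]
    constructor
    · rintro (rfl | hz)
      · exact (mem_sdiff.1 hym).1
      · exact hA hz
    · intro hz
      by_cases hzX : z ∈ X.1
      · exact Or.inr hzX
      · left
        have : z ∈ A.1 \ X.1 := mem_sdiff.2 ⟨hz, hzX⟩
        rw [hy, mem_singleton] at this
        exact this

lemma incl_transpose_mul (k : ℕ) (hk : 1 ≤ k) (hn : 2*k ≤ Fintype.card V) :
    (inclMatrix V k (k+1))ᵀ * inclMatrix V k (k+1)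
      = inclMatrix V (k-1) k * (inclMatrix V (k-1) k)ᵀ
        + ((Fintype.card V - 2*k : ℕ) : ℝ) • (1 : Matrix (KSet V k) (KSet V k) ℝ) := by
  classical
  ext X Y
  have hLHS : ((inclMatrix V k (k+1))ᵀ * inclMatrix V k (k+1)) X Y
      = ((univ.filter (fun A : KSet V (k+1) => X.1 ⊆ A.1 ∧ Y.1 ⊆ A.1)).card : ℝ) := by
    rw [Matrix.mul_apply, ← Finset.sum_boole]
    refine Finset.sum_congr rfl ?_
    intro A _
    simp only [Matrix.transpose_apply, inclMatrix]
    by_cases h1 : X.1 ⊆ A.1 <;> by_cases h2 : Y.1 ⊆ A.1 <;> simp [h1, h2]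
  have hRHS1 : (inclMatrix V (k-1) k * (inclMatrix V (k-1) k)ᵀ) X Y
      = ((univ.filter (fun Z : KSet V (k-1) => Z.1 ⊆ X.1 ∧ Z.1 ⊆ Y.1)).card : ℝ) := by
    rw [Matrix.mul_apply, ← Finset.sum_boole]
    refine Finset.sum_congr rfl ?_
    intro Z _
    simp only [Matrix.transpose_apply, inclMatrix]
    by_cases h1 : Z.1 ⊆ X.1 <;> by_cases h2 : Z.1 ⊆ Y.1 <;> simp [h1, h2]
  rw [Matrix.add_apply, Matrix.smul_apply, Matrix.one_apply, hLHS, hRHS1]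
  rcases eq_or_ne X Y with rfl | hXY
  · rw [if_pos rfl, smul_eq_mul, mul_one]
    have h1 : (univ.filter (fun A : KSet V (k+1) => X.1 ⊆ A.1 ∧ X.1 ⊆ A.1)).card
        = Fintype.card V - k := by
      rw [← card_supersets X]
      congr 1
      ext A
      simp [and_self]
    have hX : X.1.card = (k-1) + 1 := by rw [X.2]; omega
    have h2 : (univ.filter (fun Z : KSet V (k-1) => Z.1 ⊆ X.1 ∧ Z.1 ⊆ X.1)).card
        = (k-1) + 1 := by
      rw [← card_subsets (⟨X.1, hX⟩ : KSet V ((k-1)+1))]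
      congr 1
      ext Z
      simp [and_self]
    rw [h1, h2, show Fintype.card V - k = ((k-1)+1) + (Fintype.card V - 2*k) from by omega,
      Nat.cast_add]
  · rw [if_neg hXY, smul_zero, add_zero]
    have hval : X.1 ≠ Y.1 := fun h => hXY (Subtype.ext h)
    have hcap : (X.1 ∩ Y.1).card < k := by
      by_contra h
      push_neg at h
      have hsub : X.1 ∩ Y.1 ⊆ X.1 := inter_subset_left
      have h1 : X.1 ∩ Y.1 = X.1 := Finset.eq_of_subset_of_card_le hsub (by rw [X.2]; exact h)
      have hsub2 : X.1 ⊆ Y.1 := by rw [← h1]; exact inter_subset_right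
      exact hval (Finset.eq_of_subset_of_card_le hsub2 (by rw [X.2, Y.2]))
    have hcup : (X.1 ∪ Y.1).card + (X.1 ∩ Y.1).card = 2*k := by
      rw [Finset.card_union_add_card_inter, X.2, Y.2]; ring
    rcases eq_or_lt_of_le (show (X.1 ∩ Y.1).card ≤ k - 1 by omega) with heq | hlt
    · -- |X ∩ Y| = k - 1
      have hcupc : (X.1 ∪ Y.1).card = k+1 := by omega
      have hicap : (X.1 ∩ Y.1).card = k-1 := heq
      have hL : univ.filter (fun A : KSet V (k+1) => X.1 ⊆ A.1 ∧ Y.1 ⊆ A.1)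
          = {(⟨X.1 ∪ Y.1, hcupc⟩ : KSet V (k+1))} := by
        ext A
        simp only [mem_filter, mem_univ, true_and, mem_singleton]
        constructor
        · rintro ⟨h1, h2⟩
          exact Subtype.ext (Finset.eq_of_subset_of_card_le (union_subset h1 h2)
            (by rw [A.2, hcupc])).symm
        · rintro rfl
          exact ⟨subset_union_left, subset_union_right⟩
      have hR : univ.filter (fun Z : KSet V (k-1) => Z.1 ⊆ X.1 ∧ Z.1 ⊆ Y.1)
          = {(⟨X.1 ∩ Y.1, hicap⟩ : KSet V (k-1))} := by
        ext Z
        simp only [mem_filter, mem_univ, true_and, mem_singleton]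
        constructor
        · rintro ⟨h1, h2⟩
          exact Subtype.ext (Finset.eq_of_subset_of_card_le (subset_inter h1 h2)
            (le_of_eq (hicap.trans Z.2.symm)))
        · rintro rfl
          exact ⟨inter_subset_left, inter_subset_right⟩
      rw [hL, hR, Finset.card_singleton, Finset.card_singleton]
    · -- |X ∩ Y| < k - 1
      have hL : univ.filter (fun A : KSet V (k+1) => X.1 ⊆ A.1 ∧ Y.1 ⊆ A.1) = ∅ := by
        refine Finset.filter_eq_empty_iff.2 ?_
        rintro A _ ⟨h1, h2⟩
        have := Finset.card_le_card (union_subset h1 h2)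
        rw [A.2] at this
        omega
      have hR : univ.filter (fun Z : KSet V (k-1) => Z.1 ⊆ X.1 ∧ Z.1 ⊆ Y.1) = ∅ := by
        refine Finset.filter_eq_empty_iff.2 ?_
        rintro Z _ ⟨h1, h2⟩
        have := Finset.card_le_card (subset_inter h1 h2)
        rw [Z.2] at this
        omega
      rw [hL, hR]
      simp

end TokenProof
namespace TokenProof
variable {V : Type*} [Fintype V] [DecidableEq V]
open Finset

lemma incl_mulVec_eq_zero {k : ℕ} (hk : 1 ≤ k) (hn : 2*k + 1 ≤ Fintype.card V)
    {v : KSet V k → ℝ} (hv : inclMatrix V k (k+1) *ᵥ v = 0) : v = 0 := by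
  classical
  have h1 : ((inclMatrix V k (k+1))ᵀ * inclMatrix V k (k+1)) *ᵥ v = 0 := by
    rw [← Matrix.mulVec_mulVec, hv, Matrix.mulVec_zero]
  rw [incl_transpose_mul k hk (by omega)] at h1
  have h2 : v ⬝ᵥ ((inclMatrix V (k-1) k * (inclMatrix V (k-1) k)ᵀ) *ᵥ v)
      + ((Fintype.card V - 2*k : ℕ) : ℝ) * (v ⬝ᵥ v) = 0 := by
    have h := congrArg (fun w => dotProduct v w) h1
    simpa [Matrix.add_mulVec, dotProduct_add, Matrix.smul_mulVec,
      Matrix.one_mulVec, dotProduct_smul, smul_eq_mul] using h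
  have h3 : v ⬝ᵥ ((inclMatrix V (k-1) k * (inclMatrix V (k-1) k)ᵀ) *ᵥ v)
      = ((inclMatrix V (k-1) k)ᵀ *ᵥ v) ⬝ᵥ ((inclMatrix V (k-1) k)ᵀ *ᵥ v) := by
    rw [← Matrix.mulVec_mulVec, Matrix.dotProduct_mulVec, ← Matrix.mulVec_transpose]
  have hw : (0:ℝ) ≤ ((inclMatrix V (k-1) k)ᵀ *ᵥ v) ⬝ᵥ ((inclMatrix V (k-1) k)ᵀ *ᵥ v) :=
    Finset.sum_nonneg (fun i _ => mul_self_nonneg _)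
  have hv2 : (0:ℝ) ≤ v ⬝ᵥ v := Finset.sum_nonneg (fun i _ => mul_self_nonneg _)
  have hc : (0:ℝ) < ((Fintype.card V - 2*k : ℕ) : ℝ) := by
    have : 1 ≤ Fintype.card V - 2*k := by omega
    exact_mod_cast Nat.lt_of_lt_of_le Nat.zero_lt_one (by exact_mod_cast this)
  have hvv : v ⬝ᵥ v = 0 := by nlinarith [h2, h3]
  exact dotProduct_self_eq_zero.1 hvv

end TokenProof
namespace TokenProof
open Polynomial

variable {m : Type*} [Fintype m] [DecidableEq m]

lemma charpoly_conj (P A Q : Matrix m m ℝ) (hPQ : P * Q = 1) :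
    (P * A * Q).charpoly = A.charpoly := by
  have hdet : P.det * Q.det = 1 := by rw [← Matrix.det_mul, hPQ, Matrix.det_one]
  have hPQ' : P.map (C : ℝ → ℝ[X]) * Q.map (C : ℝ → ℝ[X]) = 1 := by
    rw [← Matrix.map_mul, hPQ]
    exact Matrix.map_one _ (map_zero C) (map_one C)
  have hmain : Matrix.charmatrix (P * A * Q)
      = P.map (C : ℝ → ℝ[X]) * Matrix.charmatrix A * Q.map (C : ℝ → ℝ[X]) := by
    unfold Matrix.charmatrix
    rw [Matrix.mul_sub, Matrix.sub_mul]
    congr 1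
    · calc Matrix.scalar m (X : ℝ[X])
          = Matrix.scalar m (X : ℝ[X]) * (P.map (C : ℝ → ℝ[X]) * Q.map (C : ℝ → ℝ[X])) := by
            rw [hPQ', mul_one]
        _ = P.map (C : ℝ → ℝ[X]) * Matrix.scalar m (X : ℝ[X]) * Q.map (C : ℝ → ℝ[X]) := by
            rw [← mul_assoc]
            congr 1
            exact (Matrix.scalar_commute (X : ℝ[X])
              (fun r' => Commute.all (X : ℝ[X]) r') (P.map (C : ℝ → ℝ[X]))).eq
    · simp only [RingHom.mapMatrix_apply]
      rw [← Matrix.map_mul, ← Matrix.map_mul]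
  rw [Matrix.charpoly, Matrix.charpoly, hmain, Matrix.det_mul, Matrix.det_mul]
  have hone : (P.map (C : ℝ → ℝ[X])).det * (Q.map (C : ℝ → ℝ[X])).det = 1 := by
    rw [← Matrix.det_mul, hPQ']
    exact Matrix.det_one
  calc (P.map (C : ℝ → ℝ[X])).det * (Matrix.charmatrix A).det * (Q.map (C : ℝ → ℝ[X])).det
      = (Matrix.charmatrix A).det
        * ((P.map (C : ℝ → ℝ[X])).det * (Q.map (C : ℝ → ℝ[X])).det) := by ring
    _ = (Matrix.charmatrix A).det := by rw [hone, mul_one]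

lemma charpoly_diagonal (d : m → ℝ) :
    (Matrix.diagonal d).charpoly = ∏ i, (X - C (d i)) := by
  have h : Matrix.charmatrix (Matrix.diagonal d)
      = Matrix.diagonal (fun i => (X : ℝ[X]) - C (d i)) := by
    ext i j
    by_cases hij : i = j
    · subst hij
      rw [Matrix.charmatrix_apply_eq, Matrix.diagonal_apply_eq, Matrix.diagonal_apply_eq]
    · rw [Matrix.charmatrix_apply_ne _ _ _ hij, Matrix.diagonal_apply_ne _ hij,
        Matrix.diagonal_apply_ne _ hij, map_zero, neg_zero]
  rw [Matrix.charpoly, h, Matrix.det_diagonal]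

lemma roots_charpoly_hermitian {A : Matrix m m ℝ} (hA : A.IsHermitian) :
    A.charpoly.roots = Finset.univ.val.map hA.eigenvalues := by
  have hU1 : (hA.eigenvectorUnitary : Matrix m m ℝ) * star (hA.eigenvectorUnitary : Matrix m m ℝ)
      = 1 := Matrix.mem_unitaryGroup_iff.mp hA.eigenvectorUnitary.2
  have hsp := hA.spectral_theorem
  have hdiag : Matrix.diagonal ((RCLike.ofReal : ℝ → ℝ) ∘ hA.eigenvalues)
      = Matrix.diagonal hA.eigenvalues := by
    congr 1
  have : A.charpoly = (Matrix.diagonal hA.eigenvalues).charpoly := by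
    conv_lhs => rw [hsp]
    rw [Unitary.conjStarAlgAut_apply, hdiag, charpoly_conj _ _ _ hU1]
  rw [this, charpoly_diagonal]
  have hprod : (∏ i, ((X : ℝ[X]) - C (hA.eigenvalues i)))
      = ((Finset.univ.val.map hA.eigenvalues).map (fun a => (X : ℝ[X]) - C a)).prod := by
    rw [Multiset.map_map]
    rfl
  rw [hprod, Polynomial.roots_multiset_prod_X_sub_C]

lemma sub_smul_one_hermitian {A : Matrix m m ℝ} (hA : A.IsHermitian) (μ : ℝ) :
    A - μ • (1 : Matrix m m ℝ)
      = (hA.eigenvectorUnitary : Matrix m m ℝ)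
          * Matrix.diagonal (fun i => hA.eigenvalues i - μ)
          * star (hA.eigenvectorUnitary : Matrix m m ℝ) := by
  have hU1 : (hA.eigenvectorUnitary : Matrix m m ℝ) * star (hA.eigenvectorUnitary : Matrix m m ℝ)
      = 1 := Matrix.mem_unitaryGroup_iff.mp hA.eigenvectorUnitary.2
  have hdiag : Matrix.diagonal ((RCLike.ofReal : ℝ → ℝ) ∘ hA.eigenvalues)
      = Matrix.diagonal hA.eigenvalues := by congr 1
  have hmu : (hA.eigenvectorUnitary : Matrix m m ℝ) * (μ • (1 : Matrix m m ℝ))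
      * star (hA.eigenvectorUnitary : Matrix m m ℝ) = μ • (1 : Matrix m m ℝ) := by
    rw [Matrix.mul_smul, Matrix.smul_mul, mul_one, hU1]
  conv_lhs => rw [hA.spectral_theorem, Unitary.conjStarAlgAut_apply, hdiag, ← hmu]
  rw [← Matrix.sub_mul, ← Matrix.mul_sub, Matrix.smul_one_eq_diagonal, Matrix.diagonal_sub]

lemma rank_sub_smul_one {A : Matrix m m ℝ} (hA : A.IsHermitian) (μ : ℝ) :
    (A - μ • (1 : Matrix m m ℝ)).rank
      = (Finset.univ.filter (fun i => ¬ (μ = hA.eigenvalues i))).card := by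
  classical
  have hU1 : (hA.eigenvectorUnitary : Matrix m m ℝ) * star (hA.eigenvectorUnitary : Matrix m m ℝ)
      = 1 := Matrix.mem_unitaryGroup_iff.mp hA.eigenvectorUnitary.2
  have hdet : IsUnit (hA.eigenvectorUnitary : Matrix m m ℝ).det ∧
      IsUnit (star (hA.eigenvectorUnitary : Matrix m m ℝ)).det := by
    have h := congrArg Matrix.det hU1
    rw [Matrix.det_mul, Matrix.det_one] at h
    exact ⟨IsUnit.of_mul_eq_one _ h, IsUnit.of_mul_eq_one _ (by rwa [mul_comm] at h)⟩
  rw [sub_smul_one_hermitian hA μ]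
  rw [Matrix.rank_mul_eq_left_of_isUnit_det _ _ hdet.2,
    Matrix.rank_mul_eq_right_of_isUnit_det _ _ hdet.1]
  rw [Matrix.rank_diagonal]
  rw [Fintype.card_subtype]
  congr 1
  apply Finset.filter_congr
  intro i _
  rw [not_iff_not]
  constructor
  · intro h; linarith
  · intro h; rw [h]; ring

end TokenProof
namespace TokenProof
open Polynomial

variable {m : Type*} [Fintype m] [DecidableEq m]

lemma count_roots_eq_finrank {A : Matrix m m ℝ} (hA : A.IsHermitian) (μ : ℝ) :
    (A.charpoly.roots).count μ
      = Module.finrank ℝ (LinearMap.ker (A - μ • (1 : Matrix m m ℝ)).mulVecLin) := by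
  classical
  rw [roots_charpoly_hermitian hA, Multiset.count_map]
  have hcount : Multiset.card (Multiset.filter (fun i => μ = hA.eigenvalues i) Finset.univ.val)
      = (Finset.univ.filter (fun i => μ = hA.eigenvalues i)).card := by
    rw [Finset.card, Finset.filter_val]
  have hrn : (A - μ • (1 : Matrix m m ℝ)).rank
      + Module.finrank ℝ (LinearMap.ker (A - μ • (1 : Matrix m m ℝ)).mulVecLin)
      = Fintype.card m := by
    have h := LinearMap.finrank_range_add_finrank_ker
      ((A - μ • (1 : Matrix m m ℝ)).mulVecLin)
    rw [Module.finrank_fintype_fun_eq_card] at h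
    exact h
  have hrank := rank_sub_smul_one hA μ
  have hsplit := Finset.card_filter_add_card_filter_not
    (s := (Finset.univ : Finset m)) (p := fun i => μ = hA.eigenvalues i)
  rw [Finset.card_univ] at hsplit
  omega

lemma finrank_ker_le {α β : Type*} [Fintype α] [DecidableEq α] [Fintype β] [DecidableEq β]
    (L₁ : Matrix α α ℝ) (L₂ : Matrix β β ℝ) (Bm : Matrix β α ℝ)
    (hcomm : ∀ v, L₂ *ᵥ (Bm *ᵥ v) = Bm *ᵥ (L₁ *ᵥ v))
    (hinj : ∀ v, Bm *ᵥ v = 0 → v = 0) (μ : ℝ) :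
    Module.finrank ℝ (LinearMap.ker (L₁ - μ • (1 : Matrix α α ℝ)).mulVecLin)
      ≤ Module.finrank ℝ (LinearMap.ker (L₂ - μ • (1 : Matrix β β ℝ)).mulVecLin) := by
  have hmap : ∀ v ∈ LinearMap.ker (L₁ - μ • (1 : Matrix α α ℝ)).mulVecLin,
      Bm.mulVecLin v ∈ LinearMap.ker (L₂ - μ • (1 : Matrix β β ℝ)).mulVecLin := by
    intro v hv
    rw [LinearMap.mem_ker, Matrix.mulVecLin_apply, Matrix.sub_mulVec,
      Matrix.smul_mulVec, Matrix.one_mulVec, sub_eq_zero] at hv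
    rw [LinearMap.mem_ker, Matrix.mulVecLin_apply, Matrix.mulVecLin_apply, Matrix.sub_mulVec,
      Matrix.smul_mulVec, Matrix.one_mulVec, sub_eq_zero, hcomm v, hv,
      Matrix.mulVec_smul]
  set f := Bm.mulVecLin.restrict hmap with hf
  have hfinj : Function.Injective f := by
    intro x y hxy
    have h := congrArg Subtype.val hxy
    have h2 : Bm *ᵥ (x.1 - y.1) = 0 := by
      rw [Matrix.mulVec_sub, sub_eq_zero]
      exact h
    have := hinj _ h2
    exact Subtype.ext (by rwa [sub_eq_zero] at this)
  exact LinearMap.finrank_le_finrank_of_injective hfinj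

lemma roots_le {α β : Type*} [Fintype α] [DecidableEq α] [Fintype β] [DecidableEq β]
    {L₁ : Matrix α α ℝ} {L₂ : Matrix β β ℝ} (h₁ : L₁.IsHermitian) (h₂ : L₂.IsHermitian)
    (Bm : Matrix β α ℝ)
    (hcomm : ∀ v, L₂ *ᵥ (Bm *ᵥ v) = Bm *ᵥ (L₁ *ᵥ v))
    (hinj : ∀ v, Bm *ᵥ v = 0 → v = 0) :
    L₁.charpoly.roots ≤ L₂.charpoly.roots := by
  classical
  rw [Multiset.le_iff_count]
  intro μ
  rw [count_roots_eq_finrank h₁ μ, count_roots_eq_finrank h₂ μ]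
  exact finrank_ker_le L₁ L₂ Bm hcomm hinj μ

lemma sorted_sublist_getElem_le {l₁ l₂ : List ℝ} (h : l₁.Sublist l₂)
    (hs : l₂.Pairwise (· ≤ ·)) :
    ∀ i (h₁ : i < l₁.length) (h₂ : i < l₂.length), l₂[i] ≤ l₁[i] := by
  induction h with
  | slnil => intro i h₁ h₂; simp at h₁
  | cons a h ih =>
    intro i h₁ h₂
    rename_i l₁' l₂'
    have hi2 : i < l₂'.length := lt_of_lt_of_le h₁ h.length_le
    have hstep : (a :: l₂')[i] ≤ l₂'[i] := by
      have hmono := hs.rel_get_of_le (show (⟨i, h₂⟩ : Fin (a :: l₂').length)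
          ≤ ⟨i+1, by simpa using hi2⟩ from by simp)
      simpa [List.get_eq_getElem] using hmono
    exact le_trans hstep (ih hs.of_cons i h₁ hi2)
  | cons_cons a h ih =>
    intro i h₁ h₂
    rename_i l₁' l₂'
    cases i with
    | zero => simp
    | succ j =>
      simp only [List.getElem_cons_succ]
      exact ih hs.of_cons j (by simpa using h₁) (by simpa using h₂)

lemma second_smallest_le {s t : Multiset ℝ} (hle : s ≤ t) (hs : 2 ≤ Multiset.card s) :
    (t.sort (· ≤ ·)).getD 1 0 ≤ (s.sort (· ≤ ·)).getD 1 0 := by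
  classical
  have hlen1 : (s.sort (· ≤ ·)).length = Multiset.card s := Multiset.length_sort _
  have hlen2 : (t.sort (· ≤ ·)).length = Multiset.card t := Multiset.length_sort _
  have hct : 2 ≤ Multiset.card t := le_trans hs (Multiset.card_le_card hle)
  have hsub : (s.sort (· ≤ ·)).Sublist (t.sort (· ≤ ·)) := by
    apply List.sublist_of_subperm_of_pairwise _ (Multiset.pairwise_sort _ _) (Multiset.pairwise_sort _ _)
    rw [← Multiset.coe_le, Multiset.sort_eq, Multiset.sort_eq]
    exact hle
  have h₁ : 1 < (s.sort (· ≤ ·)).length := by omega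
  have h₂ : 1 < (t.sort (· ≤ ·)).length := by omega
  rw [List.getD_eq_getElem _ _ h₁, List.getD_eq_getElem _ _ h₂]
  exact sorted_sublist_getElem_le hsub (Multiset.pairwise_sort _ _) 1 h₁ h₂

end TokenProof
namespace TokenProof
variable {V : Type*} [Fintype V] [DecidableEq V]
open Finset

lemma lapMat_eq {α : Type*} [Fintype α] [DecidableEq α] (G : SimpleGraph α)
    [inst : DecidableRel G.Adj] : lapMat G = G.lapMatrix ℝ := by
  have h : Classical.decRel G.Adj = inst := by
    funext a b
    exact Subsingleton.elim _ _
  unfold lapMat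
  rw [h]

lemma lapMat_isHermitian {α : Type*} [Fintype α] [DecidableEq α] (G : SimpleGraph α) :
    (lapMat G).IsHermitian := by
  letI := Classical.decRel G.Adj
  rw [lapMat_eq]
  exact (SimpleGraph.posSemidef_lapMatrix ℝ G).1

lemma algConn_le_of {α β : Type*} [Fintype α] [DecidableEq α] [Fintype β] [DecidableEq β]
    (G₁ : SimpleGraph α) (G₂ : SimpleGraph β) (Bm : Matrix β α ℝ)
    (hcomm : ∀ v, lapMat G₂ *ᵥ (Bm *ᵥ v) = Bm *ᵥ (lapMat G₁ *ᵥ v))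
    (hinj : ∀ v, Bm *ᵥ v = 0 → v = 0)
    (hcard : 2 ≤ Fintype.card α) :
    algConn G₂ ≤ algConn G₁ := by
  have h₁ := lapMat_isHermitian G₁
  have h₂ := lapMat_isHermitian G₂
  have hle := roots_le h₁ h₂ Bm hcomm hinj
  have hcards : Multiset.card ((lapMat G₁).charpoly.roots) = Fintype.card α := by
    rw [roots_charpoly_hermitian h₁, Multiset.card_map]
    rfl
  unfold algConn lapSpec
  exact second_smallest_le hle (by rw [hcards]; exact hcard)

lemma two_le_card_kset (j : ℕ) (hj : 1 ≤ j) (hn : j + 1 ≤ Fintype.card V) :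
    2 ≤ Fintype.card (KSet V j) := by
  rw [Fintype.card_finset_len]
  obtain ⟨m, hm⟩ : ∃ m, Fintype.card V = m + 1 := ⟨Fintype.card V - 1, by omega⟩
  obtain ⟨i, hi⟩ : ∃ i, j = i + 1 := ⟨j - 1, by omega⟩
  rw [hm, hi, Nat.choose_succ_succ, Nat.succ_eq_add_one]
  have h1 : 0 < m.choose i := Nat.choose_pos (by omega)
  have h2 : 0 < m.choose (i+1) := Nat.choose_pos (by omega)
  omega

/-- Monotonicity step between consecutive token graphs. -/
lemma algConn_step (G : SimpleGraph V) (j : ℕ) (hj : 1 ≤ j)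
    (hn : 2*j + 2 ≤ Fintype.card V) :
    algConn (tokenGraph G (j+1)) ≤ algConn (tokenGraph G j) := by
  classical
  letI := Classical.decRel G.Adj
  refine algConn_le_of (tokenGraph G j) (tokenGraph G (j+1)) (inclMatrix V j (j+1))
    (fun v => comm_mulVec G j v) (fun v hv => incl_mulVec_eq_zero hj (by omega) hv) ?_
  exact two_le_card_kset j hj (by omega)

/-- The element of a `1`-subset. -/
noncomputable def elt (A : KSet V 1) : V := (Finset.card_eq_one.mp A.2).choose

lemma elt_spec (A : KSet V 1) : A.1 = {elt A} := (Finset.card_eq_one.mp A.2).choose_spec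

lemma elt_eq {A : KSet V 1} {x : V} (h : A.1 = {x}) : elt A = x := by
  have h2 := elt_spec A
  rw [h] at h2
  exact (Finset.singleton_injective h2.symm)

/-- The `0/1` matrix identifying `V` with the `1`-subsets. -/
def Pmat (V : Type*) [Fintype V] [DecidableEq V] : Matrix (KSet V 1) V ℝ :=
  fun A x => if A.1 = {x} then 1 else 0

lemma Pmat_mulVec (v : V → ℝ) (A : KSet V 1) : (Pmat V *ᵥ v) A = v (elt A) := by
  unfold Pmat
  rw [show (Matrix.mulVec (fun (A : KSet V 1) (x : V) => if A.1 = {x} then (1:ℝ) else 0) v) A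
    = ∑ x, (if A.1 = {x} then (1:ℝ) else 0) * v x from rfl]
  have hA := elt_spec A
  have : ∀ x : V, ((if A.1 = {x} then (1:ℝ) else 0) * v x)
      = (if x = elt A then v x else 0) := by
    intro x
    by_cases h : A.1 = {x}
    · rw [if_pos h, if_pos (by rw [elt_eq h]), one_mul]
    · rw [if_neg h, if_neg, zero_mul]
      intro hx
      exact h (by rw [hx]; exact hA)
  rw [Finset.sum_congr rfl (fun x _ => this x), Finset.sum_ite_eq' univ (elt A) v,
    if_pos (mem_univ _)]

lemma Pmat_inj (v : V → ℝ) (hv : Pmat V *ᵥ v = 0) : v = 0 := by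
  funext x
  have h := congrFun hv ⟨{x}, Finset.card_singleton x⟩
  rw [Pmat_mulVec] at h
  rw [elt_eq rfl] at h
  exact h

lemma lapMat_G_mulVec (G : SimpleGraph V) [DecidableRel G.Adj] (v : V → ℝ) (x : V) :
    (lapMat G *ᵥ v) x
      = ∑ p ∈ univ.filter (fun p : V × V => G.Adj p.1 p.2),
          (if p.1 = x then v x - v p.2 else 0) := by
  classical
  have hlap : (lapMat G *ᵥ v) x
      = (G.degree x : ℝ) * v x - ∑ u ∈ G.neighborFinset x, v u := by
    rw [lapMat_eq]
    exact SimpleGraph.lapMatrix_mulVec_apply G x v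
  rw [hlap]
  have hsplit : ∀ p : V × V, (if p.1 = x then v x - v p.2 else 0)
      = (if p.1 = x then (1:ℝ) else 0) * v x - (if p.1 = x then v p.2 else 0) := by
    intro p
    by_cases h : p.1 = x <;> simp [h]
  simp only [hsplit]
  rw [Finset.sum_sub_distrib, ← Finset.sum_mul, ← Finset.sum_filter, ← Finset.sum_filter,
    Finset.filter_filter]
  set Pc := univ.filter (fun p : V × V => G.Adj p.1 p.2 ∧ p.1 = x) with hPc
  have hmem : ∀ p : V × V, p ∈ Pc ↔ G.Adj p.1 p.2 ∧ p.1 = x := by intro p; simp [hPc]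
  have hdeg : ((G.degree x : ℝ)) = ∑ _p ∈ Pc, (1:ℝ) := by
    rw [Finset.sum_const, nsmul_eq_mul, mul_one]
    norm_cast
    rw [← SimpleGraph.card_neighborFinset_eq_degree]
    refine (Finset.card_bij (fun p (hp : p ∈ Pc) => p.2) ?_ ?_ ?_).symm
    · intro p hp
      rcases (hmem p).1 hp with ⟨hadj, h1⟩
      rw [SimpleGraph.mem_neighborFinset]
      exact h1 ▸ hadj
    · intro p hp q hq hpq
      rcases (hmem p).1 hp with ⟨_, h1⟩
      rcases (hmem q).1 hq with ⟨_, h2⟩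
      exact Prod.ext (h1.trans h2.symm) hpq
    · intro u hu
      rw [SimpleGraph.mem_neighborFinset] at hu
      exact ⟨(x, u), (hmem _).2 ⟨hu, rfl⟩, rfl⟩
  have hsum : ∑ p ∈ Pc, v p.2 = ∑ u ∈ G.neighborFinset x, v u := by
    refine Finset.sum_bij (fun p (hp : p ∈ Pc) => p.2) ?_ ?_ ?_ ?_
    · intro p hp
      rcases (hmem p).1 hp with ⟨hadj, h1⟩
      rw [SimpleGraph.mem_neighborFinset]
      exact h1 ▸ hadj
    · intro p hp q hq hpq
      rcases (hmem p).1 hp with ⟨_, h1⟩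
      rcases (hmem q).1 hq with ⟨_, h2⟩
      exact Prod.ext (h1.trans h2.symm) hpq
    · intro u hu
      rw [SimpleGraph.mem_neighborFinset] at hu
      exact ⟨(x, u), (hmem _).2 ⟨hu, rfl⟩, rfl⟩
    · intro p hp; rfl
  rw [hdeg, hsum]

lemma singleton_comm (G : SimpleGraph V) [DecidableRel G.Adj] (v : V → ℝ) :
    lapMat (tokenGraph G 1) *ᵥ (Pmat V *ᵥ v) = Pmat V *ᵥ (lapMat G *ᵥ v) := by
  funext A
  have hA : A.1 = {elt A} := elt_spec A
  rw [Pmat_mulVec, lapMat_mulVec_eq G 1 (Pmat V *ᵥ v) A, lapMat_G_mulVec G v (elt A)]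
  refine Finset.sum_congr rfl ?_
  intro p hp
  simp only [mem_filter, mem_univ, true_and] at hp
  by_cases h1 : p.1 = elt A
  · have hcond : p.1 ∈ A.1 ∧ p.2 ∉ A.1 := by
      constructor
      · rw [hA, mem_singleton]; exact h1
      · rw [hA, mem_singleton]
        intro h2
        exact hp.ne (h1.trans h2.symm)
    rw [if_pos hcond, if_pos h1, Pmat_mulVec]
    have hmv : mvs p.1 p.2 A.1 = {p.2} := by
      rw [hA, h1]
      unfold mvs
      rw [Finset.erase_singleton, insert_empty_eq]
    rw [hmv, extF_eq _ (Finset.card_singleton p.2), Pmat_mulVec,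
      elt_eq (A := ⟨{p.2}, Finset.card_singleton p.2⟩) rfl]
  · have hcond : ¬ (p.1 ∈ A.1 ∧ p.2 ∉ A.1) := by
      rintro ⟨hc1, _⟩
      rw [hA, mem_singleton] at hc1
      exact h1 hc1
    rw [if_neg hcond, if_neg h1]

end TokenProof
theorem stmt_3 {n k : ℕ} (G : SimpleGraph (Fin n)) (hk : 2 ≤ k) (hkn : k ≤ n / 2) :
    algConn (tokenGraph G k) ≤ algConn (tokenGraph G (k - 1)) ∧
      algConn (tokenGraph G 2) ≤ algConn G := by
  classical
  have h2k : 2 * k ≤ n := by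
    have := (Nat.le_div_iff_mul_le (by norm_num : 0 < 2)).1 hkn
    omega
  have hcard : Fintype.card (Fin n) = n := Fintype.card_fin n
  constructor
  · obtain ⟨j, rfl⟩ : ∃ j, k = j + 1 := ⟨k - 1, by omega⟩
    have hj : 1 ≤ j := by omega
    have hstep : algConn (tokenGraph G (j+1)) ≤ algConn (tokenGraph G j) :=
      TokenProof.algConn_step G j hj (by rw [hcard]; omega)
    simpa using hstep
  · letI := Classical.decRel G.Adj
    refine TokenProof.algConn_le_of G (tokenGraph G 2)
      (inclMatrix (Fin n) 1 2 * TokenProof.Pmat (Fin n)) ?_ ?_ ?_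
    · intro v
      rw [← Matrix.mulVec_mulVec, ← Matrix.mulVec_mulVec]
      exact (TokenProof.comm_mulVec G 1 (TokenProof.Pmat (Fin n) *ᵥ v)).trans
        (congrArg (fun w => inclMatrix (Fin n) 1 2 *ᵥ w) (TokenProof.singleton_comm G v))
    · intro v hv
      rw [← Matrix.mulVec_mulVec] at hv
      exact TokenProof.Pmat_inj v
        (TokenProof.incl_mulVec_eq_zero (le_refl 1) (by rw [hcard]; omega) hv)
    · rw [hcard]; omega

end
end
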